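/- arXiv:1511.08902 — 11 statements merged into one kernel-verified Lean document; each statement's English description precedes it below -/
import Mathlib

section
/- For every nonzero vector z ∈ ℂ³ there exist t ∈ [0,1], a nonzero complex number c, and A ∈ SO(3) such that z = c • (A (ε₁ + i·t·ε₂)). (Existence part of the classification of the orbits of ℂ^× · SO(3) on ℂ³ \ {0}, Proposition A.1 of the paper.) -/
/-!
STATEMENT 0 (Proposition A.1 of the paper, existence part):
For every nonzero vector `z ∈ ℂ³` there exist `t ∈ [0,1]`, a nonzero complex number `c`,
and `A ∈ SO(3)` such that `z = c • (A (ε₁ + i·t·ε₂))`.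
-/

open Matrix

noncomputable section

/-- `SO(3)`: real 3×3 matrices with `AᵀA = 1` and `det A = 1`. -/
def SO3 (A : Matrix (Fin 3) (Fin 3) ℝ) : Prop := Aᵀ * A = 1 ∧ A.det = 1

/-- The action of a real 3×3 matrix on `ℂ³` by entrywise ℂ-linear extension. -/
def actC (A : Matrix (Fin 3) (Fin 3) ℝ) (z : Fin 3 → ℂ) : Fin 3 → ℂ :=
  (A.map (fun a => (a : ℂ))).mulVec z

/-- The standard basis vectors of `ℂ³`. -/
def ε₁ : Fin 3 → ℂ := ![1, 0, 0]
def ε₂ : Fin 3 → ℂ := ![0, 1, 0]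
def ε₃ : Fin 3 → ℂ := ![0, 0, 1]

lemma exists_unit_orthogonal (v : Fin 3 → ℝ) :
    ∃ e : Fin 3 → ℝ, e 0^2 + e 1^2 + e 2^2 = 1 ∧ v 0*e 0 + v 1*e 1 + v 2*e 2 = 0 := by
  by_cases h : v 1 = 0 ∧ v 2 = 0
  · exact ⟨![0,1,0], by norm_num; rfl, by simp [h.1]⟩
  · set s := Real.sqrt (v 1^2 + v 2^2) with hs
    have hpos : 0 < v 1^2 + v 2^2 := by
      rcases not_and_or.mp h with h | h <;> positivity
    have hsp : 0 < s := Real.sqrt_pos.2 hpos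
    have hs2 : s^2 = v 1^2 + v 2^2 := Real.sq_sqrt hpos.le
    refine ⟨![0, v 2 / s, -(v 1) / s], ?_, ?_⟩
    · show (0:ℝ)^2 + (v 2 / s)^2 + (-(v 1)/s)^2 = 1
      field_simp
      linarith [hs2]
    · show v 0*0 + v 1*(v 2/s) + v 2*(-(v 1)/s) = 0
      field_simp
      ring

lemma mkSO3 (v e : Fin 3 → ℝ) (hv : v 0^2 + v 1^2 + v 2^2 = 1)
    (he : e 0^2 + e 1^2 + e 2^2 = 1) (hve : v 0*e 0 + v 1*e 1 + v 2*e 2 = 0) :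
    ∃ A : Matrix (Fin 3) (Fin 3) ℝ, SO3 A ∧ (∀ j, A j 0 = v j) ∧ (∀ j, A j 1 = e j) := by
  set w : Fin 3 → ℝ := ![v 1*e 2 - v 2*e 1, v 2*e 0 - v 0*e 2, v 0*e 1 - v 1*e 0] with hw
  have hw0 : w 0 = v 1*e 2 - v 2*e 1 := rfl
  have hw1 : w 1 = v 2*e 0 - v 0*e 2 := rfl
  have hw2 : w 2 = v 0*e 1 - v 1*e 0 := rfl
  refine ⟨Matrix.of ![![v 0, e 0, w 0], ![v 1, e 1, w 1], ![v 2, e 2, w 2]], ⟨?_, ?_⟩, ?_, ?_⟩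
  · ext i j
    rw [Matrix.mul_apply]
    rw [Fin.sum_univ_three]
    fin_cases i <;> fin_cases j <;>
      simp [Matrix.transpose_apply, Matrix.one_apply, hw0, hw1, hw2] <;>
      first
        | linear_combination hv
        | linear_combination he
        | linear_combination hve
        | linear_combination (0:ℝ)
        | linear_combination (e 0^2+e 1^2+e 2^2)*hv + he - (v 0*e 0+v 1*e 1+v 2*e 2)*hve
  · rw [Matrix.det_fin_three]
    simp [hw0, hw1, hw2]
    linear_combination (e 0^2+e 1^2+e 2^2)*hv + he - (v 0*e 0+v 1*e 1+v 2*e 2)*hve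
  · intro j; fin_cases j <;> rfl
  · intro j; fin_cases j <;> rfl

set_option maxHeartbeats 1600000 in
/-- Normal form for a pair of real vectors with `a·b = 0`, `‖b‖ ≤ ‖a‖`, `a ≠ 0`. -/
lemma normal_form (a b : Fin 3 → ℝ)
    (him : a 0*b 0 + a 1*b 1 + a 2*b 2 = 0)
    (hba : b 0^2 + b 1^2 + b 2^2 ≤ a 0^2 + a 1^2 + a 2^2)
    (hapos : 0 < a 0^2 + a 1^2 + a 2^2) :
    ∃ t : ℝ, t ∈ Set.Icc (0:ℝ) 1 ∧ ∃ r : ℝ, 0 < r ∧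
      ∃ A : Matrix (Fin 3) (Fin 3) ℝ, SO3 A ∧
        (∀ j, r * A j 0 = a j) ∧ (∀ j, r * t * A j 1 = b j) := by
  have hj3 : ∀ j : Fin 3, j = 0 ∨ j = 1 ∨ j = 2 := by decide
  set α : ℝ := a 0^2 + a 1^2 + a 2^2 with hαdef
  set β : ℝ := b 0^2 + b 1^2 + b 2^2 with hβdef
  have hβ0 : 0 ≤ β := by positivity
  set r : ℝ := Real.sqrt α with hrdef
  have hr : 0 < r := Real.sqrt_pos.2 hapos
  have hr2 : r^2 = α := Real.sq_sqrt hapos.le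
  set t : ℝ := Real.sqrt β / Real.sqrt α with htdef
  have ht : t ∈ Set.Icc (0:ℝ) 1 := by
    constructor
    · positivity
    · rw [htdef, div_le_one hr]
      exact Real.sqrt_le_sqrt hba
  set v : Fin 3 → ℝ := fun j => a j / r with hvdef
  have hv : v 0^2 + v 1^2 + v 2^2 = 1 := by
    simp only [hvdef]
    field_simp
    linarith [hr2]
  have hrv : ∀ j, r * v j = a j := by
    intro j; simp only [hvdef]; field_simp
  obtain ⟨e, he1, hve, hbe⟩ :
      ∃ e : Fin 3 → ℝ, (e 0^2 + e 1^2 + e 2^2 = 1) ∧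
        (v 0*e 0 + v 1*e 1 + v 2*e 2 = 0) ∧ ∀ j, r * t * e j = b j := by
    by_cases hβz : β = 0
    · obtain ⟨e, he1, hve'⟩ := exists_unit_orthogonal v
      have ht0 : t = 0 := by simp [htdef, hβz]
      have hβz' : b 0^2 + b 1^2 + b 2^2 = 0 := by rw [← hβdef]; exact hβz
      have hbj : ∀ j, b j = 0 := by
        have h0 : b 0 ^ 2 = 0 := by nlinarith [sq_nonneg (b 1), sq_nonneg (b 2)]
        have h1 : b 1 ^ 2 = 0 := by nlinarith [sq_nonneg (b 0), sq_nonneg (b 2)]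
        have h2 : b 2 ^ 2 = 0 := by nlinarith [sq_nonneg (b 0), sq_nonneg (b 1)]
        intro j
        rcases hj3 j with rfl | rfl | rfl
        · exact sq_eq_zero_iff.mp h0
        · exact sq_eq_zero_iff.mp h1
        · exact sq_eq_zero_iff.mp h2
      exact ⟨e, he1, hve', fun j => by rw [ht0, hbj j]; ring⟩
    · have hβpos : 0 < β := lt_of_le_of_ne hβ0 (Ne.symm hβz)
      have hsβ : 0 < Real.sqrt β := Real.sqrt_pos.2 hβpos
      have hsβ2 : (Real.sqrt β)^2 = β := Real.sq_sqrt hβpos.le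
      refine ⟨fun j => b j / Real.sqrt β, ?_, ?_, ?_⟩
      · show (b 0 / Real.sqrt β)^2 + (b 1 / Real.sqrt β)^2 + (b 2 / Real.sqrt β)^2 = 1
        field_simp
        try linarith [hsβ2]
      · show v 0 * (b 0 / Real.sqrt β) + v 1 * (b 1 / Real.sqrt β) + v 2 * (b 2 / Real.sqrt β) = 0
        simp only [hvdef]
        field_simp
        linear_combination him
      · intro j
        show r * t * (b j / Real.sqrt β) = b j
        rw [htdef, hrdef]
        field_simp
        try ring
  obtain ⟨A, hA, hA0, hA1⟩ := mkSO3 v e hv he1 hve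
  exact ⟨t, ht, r, hr, A, hA,
    fun j => by rw [hA0 j]; exact hrv j,
    fun j => by rw [hA1 j]; exact hbe j⟩

set_option maxHeartbeats 1600000 in
theorem orbits_SO3_existence (z : Fin 3 → ℂ) (hz : z ≠ 0) :
    ∃ t : ℝ, t ∈ Set.Icc (0 : ℝ) 1 ∧ ∃ c : ℂ, c ≠ 0 ∧
      ∃ A : Matrix (Fin 3) (Fin 3) ℝ, SO3 A ∧
        z = c • actC A (ε₁ + (Complex.I * (t : ℂ)) • ε₂) := by
  classical
  obtain ⟨u, m, hu, hm, huQ⟩ : ∃ (u : ℂ) (m : ℝ), u ≠ 0 ∧ 0 ≤ m ∧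
      u^2 * (z 0^2 + z 1^2 + z 2^2) = (m : ℂ) := by
    set Q : ℂ := z 0^2 + z 1^2 + z 2^2 with hQdef
    by_cases hQ0 : Q = 0
    · exact ⟨1, 0, one_ne_zero, le_refl 0, by simp [hQ0]⟩
    · obtain ⟨u, hu2⟩ := IsAlgClosed.exists_pow_nat_eq
        ((starRingEnd ℂ) Q / ((‖Q‖ : ℝ) : ℂ)) (n := 2) (by norm_num)
      have habs : ((‖Q‖ : ℝ) : ℂ) ≠ 0 := by
        simpa using (norm_ne_zero_iff.mpr hQ0)
      refine ⟨u, ‖Q‖, ?_, norm_nonneg Q, ?_⟩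
      · intro h
        rw [h] at hu2
        have h2 : (starRingEnd ℂ) Q = 0 := by
          field_simp at hu2
          simpa using hu2.symm
        exact hQ0 (by simpa using congrArg (starRingEnd ℂ) h2)
      · rw [hu2]
        field_simp
        rw [mul_comm, Complex.mul_conj, Complex.normSq_eq_norm_sq]
        push_cast
        ring
  obtain ⟨a, b, hab⟩ : ∃ a b : Fin 3 → ℝ, ∀ j,
      u * z j = (a j : ℂ) + (b j : ℂ) * Complex.I :=
    ⟨fun j => (u * z j).re, fun j => (u * z j).im, fun j => (Complex.re_add_im _).symm⟩
  have hQ2 : ((m : ℝ) : ℂ)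
      = ((a 0 : ℂ) + b 0 * Complex.I)^2 + ((a 1 : ℂ) + b 1 * Complex.I)^2
        + ((a 2 : ℂ) + b 2 * Complex.I)^2 := by
    rw [← huQ, ← hab 0, ← hab 1, ← hab 2]; ring
  have hre : a 0^2 + a 1^2 + a 2^2 - (b 0^2 + b 1^2 + b 2^2) = m := by
    have h := congrArg Complex.re hQ2
    simp only [Complex.ofReal_re, Complex.add_re, Complex.add_im, pow_two, Complex.mul_re,
      Complex.mul_im, Complex.ofReal_im, Complex.I_re, Complex.I_im] at h
    linear_combination -h
  have him : a 0 * b 0 + a 1 * b 1 + a 2 * b 2 = 0 := by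
    have h := congrArg Complex.im hQ2
    simp only [Complex.ofReal_im, Complex.add_re, Complex.add_im, pow_two, Complex.mul_re,
      Complex.mul_im, Complex.ofReal_re, Complex.I_re, Complex.I_im] at h
    linear_combination - h / 2
  have hsumpos : 0 < (a 0^2 + a 1^2 + a 2^2) + (b 0^2 + b 1^2 + b 2^2) := by
    obtain ⟨j, hj⟩ : ∃ j, z j ≠ 0 := by
      by_contra h; push_neg at h; exact hz (funext h)
    have h1 : 0 < Complex.normSq (u * z j) := Complex.normSq_pos.2 (mul_ne_zero hu hj)
    rw [hab j] at h1
    have h2 : Complex.normSq ((a j : ℂ) + (b j : ℂ) * Complex.I) = a j^2 + b j^2 := by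
      simp [Complex.normSq_apply]
      ring
    rw [h2] at h1
    have hj3 : ∀ j : Fin 3, j = 0 ∨ j = 1 ∨ j = 2 := by decide
    rcases hj3 j with rfl | rfl | rfl <;>
      nlinarith [sq_nonneg (a 0), sq_nonneg (a 1), sq_nonneg (a 2),
        sq_nonneg (b 0), sq_nonneg (b 1), sq_nonneg (b 2)]
  have hba : b 0^2 + b 1^2 + b 2^2 ≤ a 0^2 + a 1^2 + a 2^2 := by linarith
  have hapos : 0 < a 0^2 + a 1^2 + a 2^2 := by linarith
  obtain ⟨t, ht, r, hr, A, hA, hra, hrb⟩ := normal_form a b him hba hapos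
  refine ⟨t, ht, (r : ℂ) / u, div_ne_zero (by exact_mod_cast hr.ne') hu, A, hA, ?_⟩
  funext j
  have hact : actC A (ε₁ + (Complex.I * (t : ℂ)) • ε₂) j
      = (A j 0 : ℂ) + Complex.I * (t : ℂ) * (A j 1 : ℂ) := by
    simp only [actC, Matrix.mulVec, dotProduct, Fin.sum_univ_three,
      Matrix.map_apply, Pi.add_apply, Pi.smul_apply, smul_eq_mul, ε₁, ε₂]
    simp
    ring
  simp only [Pi.smul_apply, smul_eq_mul, hact]
  apply mul_left_cancel₀ hu
  rw [hab j]
  rw [show u * ((r:ℂ)/u * ((A j 0 : ℂ) + Complex.I * (t:ℂ) * (A j 1 : ℂ)))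
      = (r:ℂ) * ((A j 0 : ℂ) + Complex.I * (t:ℂ) * (A j 1 : ℂ)) from by field_simp]
  rw [← hra j, ← hrb j]
  push_cast
  ring
end
end

section
/- If t, t' ∈ [0,1], c is a nonzero complex number, A ∈ SO(3), and c • (A (ε₁ + i·t·ε₂)) = ε₁ + i·t'·ε₂, then t = t'. (Uniqueness part of the classification of the orbits of ℂ^× · SO(3) on ℂ³ \ {0}, Proposition A.1 of the paper.) -/
/-!
STATEMENT 1 (Proposition A.1 of the paper, uniqueness part):
If `t, t' ∈ [0,1]`, `c ≠ 0` complex, `A ∈ SO(3)`, and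
`c • (A (ε₁ + i·t·ε₂)) = ε₁ + i·t'·ε₂`, then `t = t'`.
-/

open Matrix

noncomputable section

theorem orbits_SO3_uniqueness (t t' : ℝ) (ht : t ∈ Set.Icc (0 : ℝ) 1)
    (ht' : t' ∈ Set.Icc (0 : ℝ) 1) (c : ℂ) (hc : c ≠ 0)
    (A : Matrix (Fin 3) (Fin 3) ℝ) (hA : SO3 A)
    (h : c • actC A (ε₁ + (Complex.I * (t : ℂ)) • ε₂) = ε₁ + (Complex.I * (t' : ℂ)) • ε₂) :
    t = t' := by
  obtain ⟨ht0, ht1⟩ := ht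
  obtain ⟨ht0', ht1'⟩ := ht'
  have e0 := congrFun h 0
  have e1 := congrFun h 1
  have e2 := congrFun h 2
  simp only [actC, Matrix.mulVec, dotProduct, Fin.sum_univ_three, ε₁, ε₂,
    Matrix.map_apply, Pi.smul_apply, smul_eq_mul, Pi.add_apply,
    Matrix.cons_val_zero, Matrix.cons_val_one, Matrix.head_cons,
    Matrix.cons_val_two, Matrix.tail_cons, mul_one, mul_zero, add_zero, zero_add] at e0 e1 e2
  have h00 : A 0 0 * A 0 0 + A 1 0 * A 1 0 + A 2 0 * A 2 0 = 1 := by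
    have := congrFun (congrFun hA.1 0) 0
    simpa [Matrix.mul_apply, Matrix.transpose_apply, Fin.sum_univ_three,
      Matrix.one_apply] using this
  have h01 : A 0 0 * A 0 1 + A 1 0 * A 1 1 + A 2 0 * A 2 1 = 0 := by
    have := congrFun (congrFun hA.1 0) 1
    simpa [Matrix.mul_apply, Matrix.transpose_apply, Fin.sum_univ_three,
      Matrix.one_apply] using this
  have h11 : A 0 1 * A 0 1 + A 1 1 * A 1 1 + A 2 1 * A 2 1 = 1 := by
    have := congrFun (congrFun hA.1 1) 1
    simpa [Matrix.mul_apply, Matrix.transpose_apply, Fin.sum_univ_three,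
      Matrix.one_apply] using this
  have hc00 : (A 0 0 : ℂ) * A 0 0 + (A 1 0 : ℂ) * A 1 0 + (A 2 0 : ℂ) * A 2 0 = 1 := by
    exact_mod_cast congrArg (fun x : ℝ => (x : ℂ)) h00
  have hc01 : (A 0 0 : ℂ) * A 0 1 + (A 1 0 : ℂ) * A 1 1 + (A 2 0 : ℂ) * A 2 1 = 0 := by
    exact_mod_cast congrArg (fun x : ℝ => (x : ℂ)) h01
  have hc11 : (A 0 1 : ℂ) * A 0 1 + (A 1 1 : ℂ) * A 1 1 + (A 2 1 : ℂ) * A 2 1 = 1 := by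
    exact_mod_cast congrArg (fun x : ℝ => (x : ℂ)) h11
  have hI : Complex.I ^ 2 = -1 := Complex.I_sq
  have hQ : c ^ 2 * (1 - (t : ℂ) ^ 2) = 1 - (t' : ℂ) ^ 2 := by
    linear_combination (c * ((A 0 0 : ℂ) + (A 0 1 : ℂ) * (Complex.I * t)) + 1) * e0 +
      (c * ((A 1 0 : ℂ) + (A 1 1 : ℂ) * (Complex.I * t)) + Complex.I * t') * e1 +
      (c * ((A 2 0 : ℂ) + (A 2 1 : ℂ) * (Complex.I * t))) * e2 +
      (-(c ^ 2)) * hc00 + (-(2 * Complex.I * t * c ^ 2)) * hc01 +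
      (-(c ^ 2 * Complex.I ^ 2 * t ^ 2)) * hc11 + ((t' : ℂ) ^ 2 - c ^ 2 * t ^ 2) * hI
  have n0 := congrArg Complex.normSq e0
  have n1 := congrArg Complex.normSq e1
  have n2 := congrArg Complex.normSq e2
  simp only [Complex.normSq_apply, Complex.add_re, Complex.add_im, Complex.mul_re,
    Complex.mul_im, Complex.I_re, Complex.I_im, Complex.ofReal_re, Complex.ofReal_im,
    Complex.one_re, Complex.one_im, mul_zero, zero_mul, one_mul, mul_one,
    sub_zero, zero_sub, add_zero, zero_add, neg_zero, Complex.zero_re, Complex.zero_im] at n0 n1 n2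
  ring_nf at n0 n1 n2
  have hN : Complex.normSq c * (1 + t ^ 2) = 1 + t' ^ 2 := by
    simp only [Complex.normSq_apply]
    linear_combination n0 + n1 + n2 - (c.re ^ 2 + c.im ^ 2) * h00 -
      (c.re ^ 2 + c.im ^ 2) * t ^ 2 * h11
  have hQr : Complex.normSq c * (1 - t ^ 2) = 1 - t' ^ 2 := by
    have habs := congrArg (‖·‖) hQ
    have h1 : (1 : ℂ) - (t : ℂ) ^ 2 = ((1 - t ^ 2 : ℝ) : ℂ) := by push_cast; ring
    have h2 : (1 : ℂ) - (t' : ℂ) ^ 2 = ((1 - t' ^ 2 : ℝ) : ℂ) := by push_cast; ring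
    rw [h1, h2, norm_mul, Complex.norm_real, Complex.norm_real,
      Real.norm_eq_abs, Real.norm_eq_abs,
      abs_of_nonneg (by nlinarith : (0:ℝ) ≤ 1 - t ^ 2),
      abs_of_nonneg (by nlinarith : (0:ℝ) ≤ 1 - t' ^ 2)] at habs
    have : ‖c ^ 2‖ = Complex.normSq c := by
      rw [norm_pow, ← Complex.sq_norm]
    rw [this] at habs
    exact habs
  have hr1 : Complex.normSq c = 1 := by linarith
  have ht2 : t ^ 2 = t' ^ 2 := by
    rw [hr1] at hQr; linarith
  have h2 : (t - t') * (t + t') = 0 := by linear_combination ht2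
  rcases mul_eq_zero.mp h2 with h3 | h3
  · linarith
  · linarith
end
end

section
/- Let 0 < t < 1. If c is a nonzero complex number, A ∈ SO(3), and c • (A (ε₁ + i·t·ε₂)) = ε₁ + i·t·ε₂, then either c = 1 and A is the identity matrix, or c = −1 and A = diag(−1,−1,1). (Stabilizer computation for the generic canonical form in Proposition A.1: the stabilizer of ε₁ + i t ε₂ in ℂ^× × SO(3) is a group of order two.) -/
/-!
STATEMENT 2 (Proposition A.1 of the paper, stabilizer of the generic canonical form):
Let `0 < t < 1`. If `c ≠ 0` complex, `A ∈ SO(3)`, and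
`c • (A (ε₁ + i·t·ε₂)) = ε₁ + i·t·ε₂`, then either `c = 1` and `A = 1`,
or `c = −1` and `A = diag(−1,−1,1)`.
-/

open Matrix

noncomputable section

lemma aux_ext (t x y u v : ℝ) (ht : t ≠ 0)
    (h : (x:ℂ) + (y:ℂ)*(Complex.I*(t:ℂ)) = (u:ℂ) + (v:ℂ)*(Complex.I*(t:ℂ))) :
    x = u ∧ y = v := by
  rw [Complex.ext_iff] at h
  simp [Complex.add_re, Complex.add_im, Complex.mul_re, Complex.mul_im] at h
  obtain ⟨h1, h2⟩ := h
  exact ⟨h1, h2.resolve_right ht⟩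

theorem stabilizer_generic_SO3 (t : ℝ) (ht0 : 0 < t) (ht1 : t < 1)
    (c : ℂ) (hc : c ≠ 0) (A : Matrix (Fin 3) (Fin 3) ℝ) (hA : SO3 A)
    (h : c • actC A (ε₁ + (Complex.I * (t : ℂ)) • ε₂) = ε₁ + (Complex.I * (t : ℂ)) • ε₂) :
    (c = 1 ∧ A = 1) ∨ (c = -1 ∧ A = Matrix.diagonal ![-1, -1, 1]) := by
  obtain ⟨hO, hD⟩ := hA
  have ht0' : t ≠ 0 := ne_of_gt ht0
  have n0 := congrFun (congrFun hO 0) 0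
  have n1 := congrFun (congrFun hO 1) 1
  have n2 := congrFun (congrFun hO 2) 2
  have o01 := congrFun (congrFun hO 0) 1
  have o02 := congrFun (congrFun hO 0) 2
  have o12 := congrFun (congrFun hO 1) 2
  simp [Matrix.mul_apply, Fin.sum_univ_three, Matrix.transpose_apply, Matrix.one_apply] at n0 n1 n2 o01 o02 o12
  rw [Matrix.det_fin_three] at hD
  have h0 := congrFun h 0
  have h1 := congrFun h 1
  have h2 := congrFun h 2
  simp [actC, ε₁, ε₂, Matrix.mulVec, dotProduct, Fin.sum_univ_three, Matrix.map_apply] at h0 h1 h2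
  have h2' : (A 2 0 : ℂ) + (A 2 1) * (Complex.I * t) = 0 := h2.resolve_left hc
  have cn0 : (A 0 0 : ℂ) * A 0 0 + (A 1 0) * A 1 0 + (A 2 0) * A 2 0 = 1 := by exact_mod_cast n0
  have cn1 : (A 0 1 : ℂ) * A 0 1 + (A 1 1) * A 1 1 + (A 2 1) * A 2 1 = 1 := by exact_mod_cast n1
  have co01 : (A 0 0 : ℂ) * A 0 1 + (A 1 0) * A 1 1 + (A 2 0) * A 2 1 = 0 := by exact_mod_cast o01
  have key : (c - 1) * (c + 1) * ((1:ℂ) + (Complex.I * t)^2) = 0 := by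
    linear_combination (c * ((A 0 0 : ℂ) + (A 0 1) * (Complex.I * t)) + 1) * h0
      + (c * ((A 1 0 : ℂ) + (A 1 1) * (Complex.I * t)) + Complex.I * t) * h1
      + c^2 * ((A 2 0 : ℂ) + (A 2 1) * (Complex.I * t)) * h2'
      - c^2 * cn0 - c^2 * (Complex.I * t)^2 * cn1 - 2 * c^2 * (Complex.I * t) * co01
  have h1t : (1:ℂ) + (Complex.I * t)^2 = 1 - (t:ℂ)^2 := by
    rw [mul_pow, Complex.I_sq]; ring
  have hne : (1:ℂ) - (t:ℂ)^2 ≠ 0 := by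
    intro hh
    have : ((1 - t^2 : ℝ) : ℂ) = 0 := by push_cast; linear_combination hh
    have h' : (1 - t^2 : ℝ) = 0 := by exact_mod_cast this
    nlinarith
  rw [h1t] at key
  rcases mul_eq_zero.mp key with hcc | hbad
  swap
  · exact absurd hbad hne
  rcases mul_eq_zero.mp hcc with hc1 | hc2
  · -- c = 1
    have hc1 : c = 1 := sub_eq_zero.mp hc1
    subst hc1
    rw [one_mul] at h0 h1
    obtain ⟨e00, e01⟩ := aux_ext t (A 0 0) (A 0 1) 1 0 ht0' (by push_cast; linear_combination h0)
    obtain ⟨e10, e11⟩ := aux_ext t (A 1 0) (A 1 1) 0 1 ht0' (by push_cast; linear_combination h1)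
    obtain ⟨e20, e21⟩ := aux_ext t (A 2 0) (A 2 1) 0 0 ht0' (by push_cast; linear_combination h2')
    rw [e00, e10, e20] at o02
    rw [e01, e11, e21] at o12
    simp at o02 o12
    rw [e00, e01, e10, e11, e20, e21, o02, o12] at hD
    simp at hD
    left
    refine ⟨rfl, ?_⟩
    ext i j
    fin_cases i <;> fin_cases j <;>
      simp [Matrix.one_apply, e00, e01, e10, e11, e20, e21, o02, o12, hD]
  · -- c = -1
    have hc2 : c = -1 := by linear_combination hc2
    subst hc2
    obtain ⟨e00, e01⟩ := aux_ext t (A 0 0) (A 0 1) (-1) 0 ht0' (by push_cast; linear_combination -h0)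
    obtain ⟨e10, e11⟩ := aux_ext t (A 1 0) (A 1 1) 0 (-1) ht0' (by push_cast; linear_combination -h1)
    obtain ⟨e20, e21⟩ := aux_ext t (A 2 0) (A 2 1) 0 0 ht0' (by push_cast; linear_combination h2')
    rw [e00, e10, e20] at o02
    rw [e01, e11, e21] at o12
    simp at o02 o12
    rw [e00, e01, e10, e11, e20, e21, o02, o12] at hD
    simp at hD
    right
    refine ⟨rfl, ?_⟩
    ext i j
    fin_cases i <;> fin_cases j <;>
      simp [Matrix.diagonal_apply, e00, e01, e10, e11, e20, e21, o02, o12, hD]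
end
end

section
/- Let x, y ∈ ℝ³ be linearly independent and set z = x + i·y ∈ ℂ³, t₁ = ⟨x,y⟩/⟨x,x⟩, and t₂ = √(⟨y − t₁x, y − t₁x⟩/⟨x,x⟩). Then t₂ > 0 and there exist a nonzero real number r and A ∈ SO(3) with r • (A z) = (1 + i·t₁)·ε₁ + i·t₂·ε₂; moreover, if r' is a nonzero real number, A' ∈ SO(3), t₁' ∈ ℝ and t₂' > 0 satisfy r' • (A' z) = (1 + i·t₁')·ε₁ + i·t₂'·ε₂, then t₁' = t₁ and t₂' = t₂. (Classification, with explicit invariants, of the orbits of ℝ^× · SO(3) on vectors z = x + iy with x, y linearly independent, equations (A.2) and (A.4) in the proof of Proposition A.1.) -/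
/-!
STATEMENT 4 (equations (A.2) and (A.4) in the proof of Proposition A.1 of the paper):
Classification with explicit invariants of the orbits of `ℝ^× · SO(3)` on vectors
`z = x + iy` with `x, y ∈ ℝ³` linearly independent.
-/

open Matrix

noncomputable section

/-- The standard Euclidean inner product on `ℝ³`. -/
def ip (u v : Fin 3 → ℝ) : ℝ := ∑ j, u j * v j

lemma ip_mulVec (A : Matrix (Fin 3) (Fin 3) ℝ) (h : Aᵀ * A = 1) (u v : Fin 3 → ℝ) :
    ip (A.mulVec u) (A.mulVec v) = ip u v := by
  show (A.mulVec u) ⬝ᵥ (A.mulVec v) = u ⬝ᵥ v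
  rw [Matrix.dotProduct_mulVec, ← Matrix.mulVec_transpose, Matrix.mulVec_mulVec, h,
    Matrix.one_mulVec]

lemma ip_comm (u v : Fin 3 → ℝ) : ip u v = ip v u := by
  simp [ip, Fin.sum_univ_three]; ring

lemma ip_smul_left (s : ℝ) (u v : Fin 3 → ℝ) : ip (s • u) v = s * ip u v := by
  simp [ip, Fin.sum_univ_three]; ring

lemma ip_smul_right (s : ℝ) (u v : Fin 3 → ℝ) : ip u (s • v) = s * ip u v := by
  simp [ip, Fin.sum_univ_three]; ring

lemma ip_add_right (u v w : Fin 3 → ℝ) : ip u (v + w) = ip u v + ip u w := by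
  simp [ip, Fin.sum_univ_three]; ring

lemma ip_self_pos (v : Fin 3 → ℝ) (hv : v ≠ 0) : 0 < ip v v := by
  obtain ⟨j, hj⟩ := Function.ne_iff.1 hv
  exact Finset.sum_pos' (fun i _ => mul_self_nonneg _)
    ⟨j, Finset.mem_univ j, mul_self_pos.2 hj⟩

lemma actC_apply (A : Matrix (Fin 3) (Fin 3) ℝ) (x y : Fin 3 → ℝ) (j : Fin 3) :
    actC A (fun j => (x j : ℂ) + Complex.I * y j) j
      = ((A.mulVec x) j : ℂ) + Complex.I * ((A.mulVec y) j : ℂ) := by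
  simp [actC, Matrix.mulVec, dotProduct, Matrix.map_apply, Fin.sum_univ_three]
  ring

lemma so3_of_rows (a b : Fin 3 → ℝ) (ha : ip a a = 1) (hb : ip b b = 1) (hab : ip a b = 0) :
    SO3 (Matrix.of ![a, b,
      ![a 1 * b 2 - a 2 * b 1, a 2 * b 0 - a 0 * b 2, a 0 * b 1 - a 1 * b 0]]) := by
  simp only [ip, Fin.sum_univ_three] at ha hb hab
  constructor
  · rw [mul_eq_one_comm]
    ext i j
    fin_cases i <;> fin_cases j <;>
      simp [Matrix.mul_apply, Matrix.transpose, Fin.sum_univ_three,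
        Matrix.one_apply, Matrix.vecHead, Matrix.vecTail] <;>
      first
        | linear_combination ha
        | linear_combination hb
        | linear_combination hab
        | linear_combination (b 0 * b 0 + b 1 * b 1 + b 2 * b 2) * ha + hb -
            (a 0 * b 0 + a 1 * b 1 + a 2 * b 2) * hab
        | ring
  · rw [Matrix.det_fin_three]
    simp
    linear_combination (b 0 * b 0 + b 1 * b 1 + b 2 * b 2) * ha + hb -
        (a 0 * b 0 + a 1 * b 1 + a 2 * b 2) * hab

lemma cplx_vec_iff (u v : Fin 3 → ℝ) (t1 t2 : ℝ) :
    (∀ j : Fin 3, (u j : ℂ) + Complex.I * v j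
        = ((1 + Complex.I * t1) • ε₁ + (Complex.I * t2) • ε₂) j)
    ↔ (u = ![1,0,0] ∧ v = ![t1,t2,0]) := by
  constructor
  · intro h
    have h0 := h 0; have h1 := h 1; have h2 := h 2
    simp [ε₁, ε₂, Complex.ext_iff] at h0 h1 h2
    refine ⟨funext fun j => ?_, funext fun j => ?_⟩ <;> fin_cases j <;>
      simp [h0, h1, h2]
  · rintro ⟨rfl, rfl⟩ j
    fin_cases j <;> simp [ε₁, ε₂]

lemma key_iff (A : Matrix (Fin 3) (Fin 3) ℝ) (x y : Fin 3 → ℝ) (r t1 t2 : ℝ) :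
    r • actC A (fun j => (x j : ℂ) + Complex.I * y j)
        = (1 + Complex.I * t1) • ε₁ + (Complex.I * t2) • ε₂
    ↔ (r • A.mulVec x = ![1,0,0] ∧ r • A.mulVec y = ![t1,t2,0]) := by
  have e : ∀ j, (r • actC A (fun j => (x j : ℂ) + Complex.I * y j)) j
      = (((r • A.mulVec x) j : ℝ) : ℂ) + Complex.I * (((r • A.mulVec y) j : ℝ) : ℂ) := by
    intro j
    simp only [Pi.smul_apply, actC_apply, Complex.real_smul, smul_eq_mul]
    push_cast; ring
  constructor
  · intro h
    exact (cplx_vec_iff _ _ t1 t2).1 fun j => (e j).symm.trans (congrFun h j)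
  · intro h
    funext j
    rw [e j]
    exact (cplx_vec_iff _ _ t1 t2).2 h j

lemma mulVec_rows (a b c v : Fin 3 → ℝ) :
    (Matrix.of ![a, b, c]).mulVec v = ![ip a v, ip b v, ip c v] := by
  funext j
  fin_cases j <;> simp [Matrix.mulVec, dotProduct, ip, Fin.sum_univ_three]

lemma cross_ip_left (a b : Fin 3 → ℝ) :
    ip ![a 1 * b 2 - a 2 * b 1, a 2 * b 0 - a 0 * b 2, a 0 * b 1 - a 1 * b 0] a = 0 := by
  simp [ip, Fin.sum_univ_three]; ring

lemma cross_ip_right (a b : Fin 3 → ℝ) :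
    ip ![a 1 * b 2 - a 2 * b 1, a 2 * b 0 - a 0 * b 2, a 0 * b 1 - a 1 * b 0] b = 0 := by
  simp [ip, Fin.sum_univ_three]; ring

theorem orbits_RxSO3_linearly_independent (x y : Fin 3 → ℝ)
    (hxy : LinearIndependent ℝ ![x, y]) :
    let z : Fin 3 → ℂ := fun j => (x j : ℂ) + Complex.I * (y j : ℂ)
    let t₁ : ℝ := ip x y / ip x x
    let t₂ : ℝ := Real.sqrt (ip (y - t₁ • x) (y - t₁ • x) / ip x x)
    0 < t₂ ∧
    (∃ r : ℝ, r ≠ 0 ∧ ∃ A : Matrix (Fin 3) (Fin 3) ℝ, SO3 A ∧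
      r • actC A z = (1 + Complex.I * (t₁ : ℂ)) • ε₁ + (Complex.I * (t₂ : ℂ)) • ε₂) ∧
    (∀ r' : ℝ, r' ≠ 0 → ∀ A' : Matrix (Fin 3) (Fin 3) ℝ, SO3 A' →
      ∀ t₁' t₂' : ℝ, 0 < t₂' →
        r' • actC A' z = (1 + Complex.I * (t₁' : ℂ)) • ε₁ + (Complex.I * (t₂' : ℂ)) • ε₂ →
        t₁' = t₁ ∧ t₂' = t₂) := by
  intro z t₁ t₂
  have li := linearIndependent_fin2.1 hxy
  simp only [Matrix.cons_val_zero, Matrix.cons_val_one, Matrix.head_cons] at li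
  have hz : z = fun j => (x j : ℂ) + Complex.I * (y j : ℂ) := rfl
  have ht1 : t₁ = ip x y / ip x x := rfl
  have hx0 : x ≠ 0 := by
    intro h
    exact li.2 0 (by simp [h])
  have hP : 0 < ip x x := ip_self_pos x hx0
  have hPne : ip x x ≠ 0 := ne_of_gt hP
  set w : Fin 3 → ℝ := y - t₁ • x with hw
  have hw0 : w ≠ 0 := by
    intro h
    have hyx : y = t₁ • x := by rwa [hw, sub_eq_zero] at h
    by_cases ht : t₁ = 0
    · exact li.1 (by rw [hyx, ht, zero_smul])
    · exact li.2 t₁⁻¹ (by rw [hyx, smul_smul, inv_mul_cancel₀ ht, one_smul])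
  have hQ : 0 < ip w w := ip_self_pos w hw0
  have ht2 : t₂ = Real.sqrt (ip w w / ip x x) := rfl
  have ht2pos : 0 < t₂ := by
    rw [ht2]; exact Real.sqrt_pos.2 (div_pos hQ hP)
  -- key orthogonality
  have hxw : ip x w = 0 := by
    rw [hw, ht1]
    simp only [ip, Fin.sum_univ_three, Pi.sub_apply, Pi.smul_apply, smul_eq_mul]
    simp only [ip, Fin.sum_univ_three] at hPne
    have hs : x 0 ^ 2 + x 1 ^ 2 + x 2 ^ 2 ≠ 0 := by simpa [sq] using hPne
    field_simp
    ring
  refine ⟨ht2pos, ?_, ?_⟩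
  · -- existence
    set c : ℝ := Real.sqrt (ip x x) with hcdef
    have hc : 0 < c := Real.sqrt_pos.2 hP
    have hc2 : c ^ 2 = ip x x := Real.sq_sqrt hP.le
    set d : ℝ := Real.sqrt (ip w w) with hddef
    have hd : 0 < d := Real.sqrt_pos.2 hQ
    have hd2 : d ^ 2 = ip w w := Real.sq_sqrt hQ.le
    have ht2cd : t₂ = d / c := by
      rw [ht2, Real.sqrt_div hQ.le, hcdef, hddef]
    set u₁ : Fin 3 → ℝ := c⁻¹ • x with hu1
    set u₂ : Fin 3 → ℝ := d⁻¹ • w with hu2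
    have ha : ip u₁ u₁ = 1 := by
      rw [hu1, ip_smul_left, ip_smul_right, ← hc2]
      field_simp
    have hb : ip u₂ u₂ = 1 := by
      rw [hu2, ip_smul_left, ip_smul_right, ← hd2]
      field_simp
    have hab : ip u₁ u₂ = 0 := by
      rw [hu1, hu2, ip_smul_left, ip_smul_right, hxw]
      ring
    set u₃ : Fin 3 → ℝ :=
      ![u₁ 1 * u₂ 2 - u₁ 2 * u₂ 1, u₁ 2 * u₂ 0 - u₁ 0 * u₂ 2, u₁ 0 * u₂ 1 - u₁ 1 * u₂ 0]
      with hu3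
    have hA : SO3 (Matrix.of ![u₁, u₂, u₃]) := so3_of_rows u₁ u₂ ha hb hab
    refine ⟨c⁻¹, inv_ne_zero hc.ne', Matrix.of ![u₁, u₂, u₃], hA, ?_⟩
    rw [hz, key_iff]
    have hxu : x = c • u₁ := by rw [hu1, smul_smul, mul_inv_cancel₀ hc.ne', one_smul]
    have hwu : w = d • u₂ := by rw [hu2, smul_smul, mul_inv_cancel₀ hd.ne', one_smul]
    have hyu : y = (t₁ * c) • u₁ + d • u₂ := by
      rw [← hwu, ← smul_smul, ← hxu, hw]; abel
    have h31 : ip u₃ u₁ = 0 := by rw [hu3]; exact cross_ip_left u₁ u₂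
    have h32 : ip u₃ u₂ = 0 := by rw [hu3]; exact cross_ip_right u₁ u₂
    constructor
    · rw [mulVec_rows]
      funext j
      fin_cases j <;>
        simp [hxu, ip_smul_right, ha, ip_comm u₂ u₁, hab, h31, hc.ne']
    · rw [mulVec_rows]
      funext j
      fin_cases j <;>
        simp [hyu, ip_add_right, ip_smul_right, ha, hb, hab, h31, h32,
          ip_comm u₂ u₁, ht2cd]
      · field_simp
      · field_simp
  · -- uniqueness
    intro r' hr' A' hA' t₁' t₂' ht2' heq
    rw [hz, key_iff] at heq
    obtain ⟨h1, h2⟩ := heq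
    have E1 : r' ^ 2 * ip x x = 1 := by
      have := ip_mulVec A' hA'.1 x x
      have e := congrArg (fun v => ip v v) h1
      simp only [ip_smul_left, ip_smul_right] at e
      rw [this] at e
      rw [show r' ^ 2 * ip x x = r' * (r' * ip x x) by ring, e]
      simp [ip, Fin.sum_univ_three]
    have E2 : r' ^ 2 * ip x y = t₁' := by
      have := ip_mulVec A' hA'.1 x y
      have e := congrArg₂ (fun u v => ip u v) h1 h2
      simp only [ip_smul_left, ip_smul_right] at e
      rw [this] at e
      rw [show r' ^ 2 * ip x y = r' * (r' * ip x y) by ring, e]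
      simp [ip, Fin.sum_univ_three]
    have E3 : r' ^ 2 * ip y y = t₁' ^ 2 + t₂' ^ 2 := by
      have := ip_mulVec A' hA'.1 y y
      have e := congrArg (fun v => ip v v) h2
      simp only [ip_smul_left, ip_smul_right] at e
      rw [this] at e
      rw [show r' ^ 2 * ip y y = r' * (r' * ip y y) by ring, e]
      simp [ip, Fin.sum_univ_three]
      ring
    have ht1' : t₁' = t₁ := by
      rw [ht1, eq_div_iff hPne]
      have h : t₁' * ip x x = ip x y * (r' ^ 2 * ip x x) := by rw [← E2]; ring
      rw [E1] at h
      simpa using h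
    refine ⟨ht1', ?_⟩
    have hww : ip w w = ip y y - 2 * t₁ * ip x y + t₁ ^ 2 * ip x x := by
      rw [hw]
      simp only [ip, Fin.sum_univ_three, Pi.sub_apply, Pi.smul_apply, smul_eq_mul]
      ring
    have hr2 : (r' : ℝ) ^ 2 ≠ 0 := pow_ne_zero 2 hr'
    have hp : ip x x = 1 / r' ^ 2 := by field_simp; linear_combination E1
    have hq : ip x y = t₁' / r' ^ 2 := by field_simp; linear_combination E2
    have hs : ip y y = (t₁' ^ 2 + t₂' ^ 2) / r' ^ 2 := by field_simp; linear_combination E3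
    have hsq : t₂' ^ 2 = ip w w / ip x x := by
      rw [eq_div_iff hPne, hww, ht1, hp, hq, hs]
      field_simp
      ring
    rw [ht2, ← hsq, Real.sqrt_sq ht2'.le]
end
end

section
/- For every nonzero vector z ∈ ℂ³ there exist a nonzero complex number c and A ∈ SO⁺(2,1) such that c • (A z) belongs to the canonical set C = { ε₁ + i·t·ε₂ : t ∈ [−1,1] } ∪ { (ε₁+ε₃) + i·( t·(ε₁+ε₃) + (ε₁−ε₃) ) : t ∈ ℝ } ∪ { ε₁+ε₃+i·ε₂, ε₁+ε₃−i·ε₂ } ∪ { ε₃ } ∪ { ε₁+ε₃ }. (Existence part of the classification of the orbits of ℂ^× · SO⁺(2,1) on ℂ³ \ {0}, Proposition A.2 of the paper.) -/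
/-!
STATEMENT 5 (Proposition A.2 of the paper, existence part):
For every nonzero `z ∈ ℂ³` there exist a nonzero complex number `c` and
`A ∈ SO⁺(2,1)` such that `c • (A z)` belongs to the canonical set `C`.
-/

open Matrix

noncomputable section

/-- `η = diag(1,1,−1)`. -/
def η : Matrix (Fin 3) (Fin 3) ℝ := Matrix.diagonal ![1, 1, -1]

/-- `SO⁺(2,1)`: real 3×3 matrices with `Aᵀ η A = η`, `det A = 1` and `A₃₃ > 0`. -/
def SOplus21 (A : Matrix (Fin 3) (Fin 3) ℝ) : Prop :=
  Aᵀ * η * A = η ∧ A.det = 1 ∧ 0 < A 2 2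

/-- The canonical set of representatives of Proposition A.2. -/
def canonSet : Set (Fin 3 → ℂ) :=
  {w | (∃ t ∈ Set.Icc (-1 : ℝ) 1, w = ε₁ + (Complex.I * (t : ℂ)) • ε₂) ∨
       (∃ t : ℝ, w = (ε₁ + ε₃) + Complex.I • ((t : ℂ) • (ε₁ + ε₃) + (ε₁ - ε₃))) ∨
       w = ε₁ + ε₃ + Complex.I • ε₂ ∨
       w = ε₁ + ε₃ - Complex.I • ε₂ ∨
       w = ε₃ ∨
       w = ε₁ + ε₃}


lemma eta_eq : η = !![1,0,0; 0,1,0; 0,0,-1] := by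
  ext i j
  fin_cases i <;> fin_cases j <;> simp [η, Matrix.diagonal, Matrix.vecHead, Matrix.vecTail]

lemma eta_sq : η * η = 1 := by
  rw [eta_eq]
  ext i j
  fin_cases i <;> fin_cases j <;>
    simp [Matrix.mul_apply, Fin.sum_univ_three, Matrix.one_apply, Matrix.vecHead, Matrix.vecTail]

lemma other_rel (A : Matrix (Fin 3) (Fin 3) ℝ) (hA : Aᵀ * η * A = η) : A * η * Aᵀ = η := by
  have h1 : (η * Aᵀ * η) * A = 1 := by
    have e1 : (η * Aᵀ * η) * A = η * (Aᵀ * η * A) := by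
      simp only [Matrix.mul_assoc]
    rw [e1, hA, eta_sq]
  have h2 : A * (η * Aᵀ * η) = 1 := mul_eq_one_comm.mp h1
  have e2 : A * (η * Aᵀ * η) * η = A * η * Aᵀ * (η * η) := by
    simp only [Matrix.mul_assoc]
  have e3 : A * η * Aᵀ * (η * η) = 1 * η := by rw [← e2, h2]
  rw [eta_sq, Matrix.mul_one] at e3
  rw [e3, Matrix.one_mul]

lemma row2 (A : Matrix (Fin 3) (Fin 3) ℝ) (hA : Aᵀ * η * A = η) :
    A 2 0 ^ 2 + A 2 1 ^ 2 - A 2 2 ^ 2 = -1 := by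
  have h := congr_fun (congr_fun (other_rel A hA) 2) 2
  rw [eta_eq] at h
  simp [Matrix.mul_apply, Fin.sum_univ_three, Matrix.transpose_apply,
    Matrix.vecHead, Matrix.vecTail] at h
  nlinarith [h]

lemma col2 (A : Matrix (Fin 3) (Fin 3) ℝ) (hA : Aᵀ * η * A = η) :
    A 0 2 ^ 2 + A 1 2 ^ 2 - A 2 2 ^ 2 = -1 := by
  have h := congr_fun (congr_fun hA 2) 2
  rw [eta_eq] at h
  simp [Matrix.mul_apply, Fin.sum_univ_three, Matrix.transpose_apply,
    Matrix.vecHead, Matrix.vecTail] at h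
  nlinarith [h]

lemma SOplus21_one : SOplus21 1 := by
  refine ⟨by simp, by simp, by norm_num [Matrix.one_apply]⟩

lemma SOplus21.mul {A B : Matrix (Fin 3) (Fin 3) ℝ} (hA : SOplus21 A) (hB : SOplus21 B) :
    SOplus21 (A * B) := by
  obtain ⟨hA1, hA2, hA3⟩ := hA
  obtain ⟨hB1, hB2, hB3⟩ := hB
  refine ⟨?_, by rw [Matrix.det_mul, hA2, hB2, one_mul], ?_⟩
  · have e : (A * B)ᵀ * η * (A * B) = Bᵀ * (Aᵀ * η * A) * B := by
      rw [Matrix.transpose_mul]; simp only [Matrix.mul_assoc]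
    rw [e, hA1, hB1]
  · have hra := row2 A hA1
    have hcb := col2 B hB1
    have hmul : (A * B) 2 2 = A 2 0 * B 0 2 + A 2 1 * B 1 2 + A 2 2 * B 2 2 := by
      simp [Matrix.mul_apply, Fin.sum_univ_three]
    rw [hmul]
    nlinarith [sq_nonneg (A 2 0 * B 1 2 - A 2 1 * B 0 2),
      sq_nonneg (A 2 0 * B 0 2 + A 2 1 * B 1 2 + A 2 2 * B 2 2),
      mul_pos hA3 hB3, sq_nonneg (A 2 0 * B 0 2 + A 2 1 * B 1 2)]

def qR (u v : Fin 3 → ℝ) : ℝ := u 0 * v 0 + u 1 * v 1 - u 2 * v 2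

lemma qR_invariant (A : Matrix (Fin 3) (Fin 3) ℝ) (hA : Aᵀ * η * A = η) (u v : Fin 3 → ℝ) :
    qR (A.mulVec u) (A.mulVec v) = qR u v := by
  rw [eta_eq] at hA
  have h := fun i j => congr_fun (congr_fun hA i) j
  simp only [Matrix.mul_apply, Matrix.transpose_apply, Fin.sum_univ_three] at h
  have h00 := h 0 0; have h01 := h 0 1; have h02 := h 0 2
  have h10 := h 1 0; have h11 := h 1 1; have h12 := h 1 2
  have h20 := h 2 0; have h21 := h 2 1; have h22 := h 2 2
  norm_num [Matrix.vecHead, Matrix.vecTail, Matrix.cons_val_two] at h00 h01 h02 h10 h11 h12 h20 h21 h22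
  simp only [qR, Matrix.mulVec, dotProduct, Fin.sum_univ_three]
  linear_combination u 0 * v 0 * h00 + u 0 * v 1 * h01 + u 0 * v 2 * h02 +
    u 1 * v 0 * h10 + u 1 * v 1 * h11 + u 1 * v 2 * h12 +
    u 2 * v 0 * h20 + u 2 * v 1 * h21 + u 2 * v 2 * h22


def qC (u v : Fin 3 → ℂ) : ℂ := u 0 * v 0 + u 1 * v 1 - u 2 * v 2

lemma qR_smul (r : ℝ) (u v : Fin 3 → ℝ) : qR (r • u) (r • v) = r^2 * qR u v := by
  simp [qR]; ring

def rotM (co si : ℝ) : Matrix (Fin 3) (Fin 3) ℝ := !![co,-si,0; si,co,0; 0,0,1]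
def b13 (ch sh : ℝ) : Matrix (Fin 3) (Fin 3) ℝ := !![ch,0,sh; 0,1,0; sh,0,ch]
def b23 (ch sh : ℝ) : Matrix (Fin 3) (Fin 3) ℝ := !![1,0,0; 0,ch,sh; 0,sh,ch]

lemma rotM_mem (co si : ℝ) (h : co^2 + si^2 = 1) : SOplus21 (rotM co si) := by
  refine ⟨?_, ?_, ?_⟩
  · rw [eta_eq]
    ext i j
    fin_cases i <;> fin_cases j <;>
      simp [rotM, Matrix.mul_apply, Fin.sum_univ_three, Matrix.transpose_apply,
        Matrix.vecHead, Matrix.vecTail] <;> nlinarith [h]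
  · simp [rotM, Matrix.det_fin_three]; nlinarith [h]
  · norm_num [rotM, Matrix.cons_val_two]

lemma b13_mem (ch sh : ℝ) (h : ch^2 - sh^2 = 1) (hch : 0 < ch) : SOplus21 (b13 ch sh) := by
  refine ⟨?_, ?_, ?_⟩
  · rw [eta_eq]
    ext i j
    fin_cases i <;> fin_cases j <;>
      simp [b13, Matrix.mul_apply, Fin.sum_univ_three, Matrix.transpose_apply,
        Matrix.vecHead, Matrix.vecTail] <;> nlinarith [h]
  · simp [b13, Matrix.det_fin_three]; nlinarith [h]
  · norm_num [b13]; exact hch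

lemma b23_mem (ch sh : ℝ) (h : ch^2 - sh^2 = 1) (hch : 0 < ch) : SOplus21 (b23 ch sh) := by
  refine ⟨?_, ?_, ?_⟩
  · rw [eta_eq]
    ext i j
    fin_cases i <;> fin_cases j <;>
      simp [b23, Matrix.mul_apply, Fin.sum_univ_three, Matrix.transpose_apply,
        Matrix.vecHead, Matrix.vecTail] <;> nlinarith [h]
  · simp [b23, Matrix.det_fin_three]; nlinarith [h]
  · norm_num [b23]; exact hch

lemma rotM_mulVec (co si : ℝ) (v : Fin 3 → ℝ) :
    (rotM co si).mulVec v = ![co * v 0 - si * v 1, si * v 0 + co * v 1, v 2] := by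
  funext i
  fin_cases i <;>
    simp [rotM, Matrix.mulVec, dotProduct, Fin.sum_univ_three,
      Matrix.vecHead, Matrix.vecTail] <;> ring

lemma b13_mulVec (ch sh : ℝ) (v : Fin 3 → ℝ) :
    (b13 ch sh).mulVec v = ![ch * v 0 + sh * v 2, v 1, sh * v 0 + ch * v 2] := by
  funext i
  fin_cases i <;>
    simp [b13, Matrix.mulVec, dotProduct, Fin.sum_univ_three,
      Matrix.vecHead, Matrix.vecTail] <;> ring

lemma b23_mulVec (ch sh : ℝ) (v : Fin 3 → ℝ) :
    (b23 ch sh).mulVec v = ![v 0, ch * v 1 + sh * v 2, sh * v 1 + ch * v 2] := by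
  funext i
  fin_cases i <;>
    simp [b23, Matrix.mulVec, dotProduct, Fin.sum_univ_three,
      Matrix.vecHead, Matrix.vecTail] <;> ring

lemma rot_norm (x : Fin 3 → ℝ) :
    ∃ A, SOplus21 A ∧ A.mulVec x = ![Real.sqrt (x 0^2 + x 1^2), 0, x 2] := by
  rcases eq_or_lt_of_le (by positivity : (0:ℝ) ≤ x 0^2 + x 1^2) with h | h
  · have h0 : x 0 = 0 := by nlinarith
    have h1 : x 1 = 0 := by nlinarith
    refine ⟨1, SOplus21_one, ?_⟩
    rw [Matrix.one_mulVec]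
    funext i
    fin_cases i <;> simp [h0, h1, ← h]
  · set ρ := Real.sqrt (x 0^2 + x 1^2) with hρdef
    have hρ : 0 < ρ := Real.sqrt_pos.mpr h
    have hρ2 : ρ^2 = x 0^2 + x 1^2 := Real.sq_sqrt h.le
    refine ⟨rotM (x 0 / ρ) (-(x 1) / ρ), rotM_mem _ _ (by field_simp; nlinarith), ?_⟩
    rw [rotM_mulVec]
    funext i
    fin_cases i <;> simp <;> field_simp <;> nlinarith

lemma norm_spacelike (x : Fin 3 → ℝ) (hx : qR x x = 1) :
    ∃ A, SOplus21 A ∧ A.mulVec x = ![1, 0, 0] := by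
  obtain ⟨A₁, hA₁, hAx⟩ := rot_norm x
  set ρ := Real.sqrt (x 0^2 + x 1^2) with hρdef
  have hρ2 : ρ^2 = x 0^2 + x 1^2 := Real.sq_sqrt (by positivity)
  have hq : ρ^2 - x 2^2 = 1 := by simp only [qR] at hx; nlinarith
  have hρpos : 0 < ρ := by nlinarith [Real.sqrt_nonneg (x 0^2 + x 1^2)]
  refine ⟨b13 ρ (-(x 2)) * A₁, (b13_mem ρ (-(x 2)) (by nlinarith) hρpos).mul hA₁, ?_⟩
  rw [← Matrix.mulVec_mulVec, hAx, b13_mulVec]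
  funext i
  fin_cases i <;> simp <;> nlinarith

lemma norm_timelike (x : Fin 3 → ℝ) (hx : qR x x = -1) :
    ∃ A, SOplus21 A ∧ (A.mulVec x = ![0,0,1] ∨ A.mulVec x = ![0,0,-1]) := by
  obtain ⟨A₁, hA₁, hAx⟩ := rot_norm x
  set ρ := Real.sqrt (x 0^2 + x 1^2) with hρdef
  have hρ2 : ρ^2 = x 0^2 + x 1^2 := Real.sq_sqrt (by positivity)
  have hρnn : 0 ≤ ρ := Real.sqrt_nonneg _
  have hq : ρ^2 - x 2^2 = -1 := by simp only [qR] at hx; nlinarith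
  rcases lt_trichotomy (x 2) 0 with h2 | h2 | h2
  · refine ⟨b13 (-(x 2)) ρ * A₁, (b13_mem _ _ (by nlinarith) (by linarith)).mul hA₁, Or.inr ?_⟩
    rw [← Matrix.mulVec_mulVec, hAx, b13_mulVec]
    funext i
    fin_cases i <;> simp <;> nlinarith
  · exfalso; nlinarith
  · refine ⟨b13 (x 2) (-ρ) * A₁, (b13_mem _ _ (by nlinarith) (by linarith)).mul hA₁, Or.inl ?_⟩
    rw [← Matrix.mulVec_mulVec, hAx, b13_mulVec]
    funext i
    fin_cases i <;> simp <;> nlinarith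

lemma norm_null (x : Fin 3 → ℝ) (hx : qR x x = 0) (hx0 : x ≠ 0) :
    ∃ A, SOplus21 A ∧ (A.mulVec x = ![1,0,1] ∨ A.mulVec x = ![-1,0,-1]) := by
  obtain ⟨A₁, hA₁, hAx⟩ := rot_norm x
  set ρ := Real.sqrt (x 0^2 + x 1^2) with hρdef
  have hρ2 : ρ^2 = x 0^2 + x 1^2 := Real.sq_sqrt (by positivity)
  have hρnn : 0 ≤ ρ := Real.sqrt_nonneg _
  have hq : ρ^2 - x 2^2 = 0 := by simp only [qR] at hx; nlinarith
  have h2ne : x 2 ≠ 0 := by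
    intro h
    apply hx0
    have h0 : x 0 = 0 := by nlinarith
    have h1 : x 1 = 0 := by nlinarith
    funext i; fin_cases i <;> simp [h0, h1, h]
  rcases lt_trichotomy (x 2) 0 with h2 | h2 | h2
  · -- x 2 < 0, ρ = -x 2 : after rot, vector is (ρ, 0, x 2) = ρ(e1 - e3).
    -- boost with ch - sh = 1/ρ ... we need result (1,0,-1): ch*ρ + sh*x2 = 1, sh*ρ+ch*x2 = -1
    -- x2 = -ρ: ρ(ch - sh) = 1. take ch = (μ+1/μ)/2, sh = (μ-1/μ)/2 with 1/μ... set μ := 1/ρ: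
    have hρpos : 0 < ρ := by nlinarith
    refine ⟨rotM (-1) 0 * (b13 ((ρ^2+1)/(2*ρ)) ((ρ^2-1)/(2*ρ)) * A₁),
      (rotM_mem _ _ (by norm_num)).mul ((b13_mem _ _ (by field_simp; ring) (by positivity)).mul hA₁),
      Or.inr ?_⟩
    rw [← Matrix.mulVec_mulVec, ← Matrix.mulVec_mulVec, hAx, b13_mulVec, rotM_mulVec]
    have hx2 : x 2 = -ρ := by nlinarith
    funext i
    fin_cases i <;> simp [hx2] <;> field_simp <;> ring
  · exfalso; exact h2ne h2
  · have hρpos : 0 < ρ := by nlinarith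
    have hx2 : x 2 = ρ := by nlinarith
    refine ⟨b13 ((ρ^2+1)/(2*ρ)) ((1-ρ^2)/(2*ρ)) * A₁,
      (b13_mem _ _ (by field_simp; ring) (by positivity)).mul hA₁, Or.inl ?_⟩
    rw [← Matrix.mulVec_mulVec, hAx, b13_mulVec]
    funext i
    fin_cases i <;> simp [hx2] <;> field_simp <;> ring

def Good (z : Fin 3 → ℂ) : Prop :=
  ∃ c : ℂ, c ≠ 0 ∧ ∃ A : Matrix (Fin 3) (Fin 3) ℝ, SOplus21 A ∧ c • actC A z ∈ canonSet

lemma map_coe_one : (1 : Matrix (Fin 3) (Fin 3) ℝ).map (fun a => (a : ℂ)) = 1 := by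
  ext i j
  simp [Matrix.map_apply, Matrix.one_apply, apply_ite (fun r : ℝ => (r : ℂ))]

lemma actC_one (z : Fin 3 → ℂ) : actC 1 z = z := by
  unfold actC
  rw [map_coe_one, Matrix.one_mulVec]

lemma actC_mul (A B : Matrix (Fin 3) (Fin 3) ℝ) (z : Fin 3 → ℂ) :
    actC (A * B) z = actC A (actC B z) := by
  unfold actC
  rw [show (fun a : ℝ => (a : ℂ)) = ⇑Complex.ofRealHom from rfl, Matrix.map_mul,
    ← Matrix.mulVec_mulVec]

lemma actC_smul (A : Matrix (Fin 3) (Fin 3) ℝ) (c : ℂ) (z : Fin 3 → ℂ) :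
    actC A (c • z) = c • actC A z := Matrix.mulVec_smul _ _ _

def mk (x y : Fin 3 → ℝ) : Fin 3 → ℂ := fun j => (x j : ℂ) + (y j : ℂ) * Complex.I

lemma actC_mk (A : Matrix (Fin 3) (Fin 3) ℝ) (x y : Fin 3 → ℝ) :
    actC A (mk x y) = mk (A.mulVec x) (A.mulVec y) := by
  funext i
  simp only [actC, mk, Matrix.mulVec, dotProduct, Fin.sum_univ_three, Matrix.map_apply]
  push_cast
  ring

lemma good_smul (c : ℂ) (hc : c ≠ 0) (z : Fin 3 → ℂ) (h : Good (c • z)) : Good z := by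
  obtain ⟨c', hc', A, hA, hmem⟩ := h
  exact ⟨c' * c, mul_ne_zero hc' hc, A, hA, by rwa [actC_smul, smul_smul] at hmem⟩

lemma good_act (A : Matrix (Fin 3) (Fin 3) ℝ) (hA : SOplus21 A) (z : Fin 3 → ℂ)
    (h : Good (actC A z)) : Good z := by
  obtain ⟨c, hc, B, hB, hmem⟩ := h
  exact ⟨c, hc, B * A, hB.mul hA, by rwa [actC_mul]⟩

lemma good_of_canon (z : Fin 3 → ℂ) (h : z ∈ canonSet) : Good z :=
  ⟨1, one_ne_zero, 1, SOplus21_one, by rwa [actC_one, one_smul]⟩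

lemma good_of_eq (z w : Fin 3 → ℂ) (c : ℂ) (hc : c ≠ 0) (hw : c • z = w)
    (h : w ∈ canonSet) : Good z :=
  ⟨c, hc, 1, SOplus21_one, by rwa [actC_one, hw]⟩

lemma canon1 (t : ℝ) (h : -1 ≤ t) (h' : t ≤ 1) : mk ![1,0,0] ![0,t,0] ∈ canonSet := by
  left
  refine ⟨t, ⟨h, h'⟩, ?_⟩
  funext i
  fin_cases i <;> simp [mk, ε₁, ε₂] <;> ring

lemma canon2 (t : ℝ) : mk ![1,0,1] ![t+1,0,t-1] ∈ canonSet := by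
  right; left
  refine ⟨t, ?_⟩
  funext i
  fin_cases i <;> simp [mk, ε₁, ε₂, ε₃] <;> push_cast <;> ring

lemma canon3 : mk ![1,0,1] ![0,1,0] ∈ canonSet := by
  right; right; left
  funext i
  fin_cases i <;> simp [mk, ε₁, ε₂, ε₃]

lemma canon4 : mk ![1,0,1] ![0,-1,0] ∈ canonSet := by
  right; right; right; left
  funext i
  fin_cases i <;> simp [mk, ε₁, ε₂, ε₃]

lemma canon5 : mk ![0,0,1] ![0,0,0] ∈ canonSet := by
  right; right; right; right; left
  funext i
  fin_cases i <;> simp [mk, ε₁, ε₂, ε₃]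

lemma canon6 : mk ![1,0,1] ![0,0,0] ∈ canonSet := by
  right; right; right; right; right
  funext i
  fin_cases i <;> simp [mk, ε₁, ε₂, ε₃]

lemma smul_mk (r : ℝ) (x y : Fin 3 → ℝ) : (r : ℂ) • mk x y = mk (r • x) (r • y) := by
  funext i
  simp [mk, Pi.smul_apply, smul_eq_mul]
  push_cast
  ring

lemma neg_mk (x y : Fin 3 → ℝ) : (-1 : ℂ) • mk x y = mk (-x) (-y) := by
  funext i
  simp [mk, Pi.smul_apply, smul_eq_mul]
  push_cast
  ring

lemma fam2_key (u l : ℝ) (hu : u < 0) (hlpos : 0 < l) (hlu : l^2 * (-2*u) = 1 + u^2) :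
    ((((2*l/(1+u^2) : ℝ) : ℂ) * (-(u:ℂ) + Complex.I)) *
      (((l^2+1)/(2*l) : ℝ) + (((l^2-1)/(2*l))*u : ℝ) * Complex.I)
        = 1 + (((u^2-1)/(2*u)+1 : ℝ):ℂ) * Complex.I)
    ∧ ((((2*l/(1+u^2) : ℝ) : ℂ) * (-(u:ℂ) + Complex.I)) *
      (((l^2-1)/(2*l) : ℝ) + (((l^2+1)/(2*l))*u : ℝ) * Complex.I)
        = 1 + (((u^2-1)/(2*u)-1 : ℝ):ℂ) * Complex.I) := by
  have hu' : (u:ℝ) ≠ 0 := ne_of_lt hu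
  have h1u : (1:ℝ) + u^2 ≠ 0 := by positivity
  have hl' : l ≠ 0 := ne_of_gt hlpos
  have SIMP : True := trivial
  constructor
  · rw [Complex.ext_iff]
    constructor
    · simp only [Complex.add_re, Complex.mul_re, Complex.one_re, Complex.ofReal_re,
        Complex.ofReal_im, Complex.I_re, Complex.I_im, Complex.add_im, Complex.mul_im,
        Complex.neg_re, Complex.neg_im, Complex.one_im]
      field_simp
      linear_combination (2*u*l) * hlu
    · simp only [Complex.add_re, Complex.mul_re, Complex.one_re, Complex.ofReal_re,
        Complex.ofReal_im, Complex.I_re, Complex.I_im, Complex.add_im, Complex.mul_im,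
        Complex.neg_re, Complex.neg_im, Complex.one_im]
      field_simp
      linear_combination (l*(u^2-1)) * hlu
  · rw [Complex.ext_iff]
    constructor
    · simp only [Complex.add_re, Complex.mul_re, Complex.one_re, Complex.ofReal_re,
        Complex.ofReal_im, Complex.I_re, Complex.I_im, Complex.add_im, Complex.mul_im,
        Complex.neg_re, Complex.neg_im, Complex.one_im]
      field_simp
      linear_combination (2*u*l) * hlu
    · simp only [Complex.add_re, Complex.mul_re, Complex.one_re, Complex.ofReal_re,
        Complex.ofReal_im, Complex.I_re, Complex.I_im, Complex.add_im, Complex.mul_im,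
        Complex.neg_re, Complex.neg_im, Complex.one_im]
      field_simp
      linear_combination (l*(u^2-1)) * hlu

lemma fam2_neg (u : ℝ) (hu : u < 0) : Good (mk ![1,0,0] ![0,0,u]) := by
  have hposarg : 0 < (1 + u^2) / (-2*u) := div_pos (by positivity) (by linarith)
  obtain ⟨l, hlpos, hl2⟩ : ∃ l : ℝ, 0 < l ∧ l^2 = (1 + u^2) / (-2*u) :=
    ⟨Real.sqrt _, Real.sqrt_pos.mpr hposarg, Real.sq_sqrt hposarg.le⟩
  have h2u : (-2*u : ℝ) ≠ 0 := by linarith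
  have hlu : l^2 * (-2*u) = 1 + u^2 := by rw [hl2, div_mul_cancel₀ _ h2u]
  have hl' : l ≠ 0 := ne_of_gt hlpos
  have hu' : u ≠ 0 := ne_of_lt hu
  have h1u : (1:ℝ) + u^2 ≠ 0 := by positivity
  have hch : ((l^2+1)/(2*l))^2 - ((l^2-1)/(2*l))^2 = 1 := by field_simp; ring
  have hchpos : 0 < (l^2+1)/(2*l) := by positivity
  have hc : (((2*l/(1+u^2) : ℝ) : ℂ) * (-(u:ℂ) + Complex.I)) ≠ 0 := by
    apply mul_ne_zero
    · simp only [ne_eq, Complex.ofReal_eq_zero]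
      positivity
    · intro h
      have := congrArg Complex.im h
      simp at this
  refine ⟨_, hc, b13 ((l^2+1)/(2*l)) ((l^2-1)/(2*l)), b13_mem _ _ hch hchpos, ?_⟩
  have hAx : (b13 ((l^2+1)/(2*l)) ((l^2-1)/(2*l))).mulVec ![1,0,0]
      = ![(l^2+1)/(2*l), 0, (l^2-1)/(2*l)] := by
    rw [b13_mulVec]; funext i; fin_cases i <;> norm_num [Matrix.cons_val_two]
  have hAy : (b13 ((l^2+1)/(2*l)) ((l^2-1)/(2*l))).mulVec ![0,0,u]
      = ![((l^2-1)/(2*l))*u, 0, ((l^2+1)/(2*l))*u] := by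
    rw [b13_mulVec]; funext i; fin_cases i <;> norm_num [Matrix.cons_val_two]
  rw [actC_mk, hAx, hAy]
  obtain ⟨k0, k2⟩ := fam2_key u l hu hlpos hlu
  have key : (((2*l/(1+u^2) : ℝ) : ℂ) * (-(u:ℂ) + Complex.I)) •
      mk ![(l^2+1)/(2*l), 0, (l^2-1)/(2*l)] ![((l^2-1)/(2*l))*u, 0, ((l^2+1)/(2*l))*u]
      = mk ![1,0,1] ![(u^2-1)/(2*u)+1, 0, (u^2-1)/(2*u)-1] := by
    funext i
    fin_cases i
    · simpa [mk, Pi.smul_apply, smul_eq_mul] using k0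
    · simp [mk]
    · simpa [mk, Pi.smul_apply, smul_eq_mul] using k2
  rw [key]
  exact canon2 ((u^2-1)/(2*u))

lemma fam2 (u : ℝ) (hu : u ≠ 0) : Good (mk ![1,0,0] ![0,0,u]) := by
  rcases lt_or_gt_of_ne hu with h | h
  · exact fam2_neg u h
  · apply good_act (rotM (-1) 0) (rotM_mem _ _ (by norm_num))
    rw [actC_mk, rotM_mulVec, rotM_mulVec]
    apply good_smul (-1) (by norm_num)
    have e : (-1 : ℂ) • mk ![(-1:ℝ) * ![1,0,0] 0 - 0 * ![1,0,0] 1, 0 * ![1,0,0] 0 + (-1) * ![1,0,0] 1, ![(1:ℝ),0,0] 2]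
        ![(-1:ℝ) * ![0,0,u] 0 - 0 * ![0,0,u] 1, 0 * ![0,0,u] 0 + (-1) * ![0,0,u] 1, ![(0:ℝ),0,u] 2] = mk ![1,0,0] ![0,0,-u] := by
      rw [neg_mk]
      congr 1 <;> funext i <;> fin_cases i <;> norm_num [Matrix.cons_val_two]
    rw [e]
    exact fam2_neg (-u) (by linarith)

lemma good_null_pm (σ τ : ℝ) (hσ : σ = 1 ∨ σ = -1) (hτ : τ = 1 ∨ τ = -1) :
    Good (mk ![1,0,0] ![0,σ,σ*τ]) := by
  rcases hσ with h1 | h1 <;> rcases hτ with h2 | h2 <;> subst h1 <;> subst h2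
  · refine ⟨-Complex.I, by simp, rotM 0 (-1), rotM_mem _ _ (by norm_num), ?_⟩
    have : (-Complex.I) • actC (rotM 0 (-1)) (mk ![1,0,0] ![0,1,1*1]) = mk ![1,0,1] ![0,1,0] := by
      rw [actC_mk, rotM_mulVec, rotM_mulVec]
      funext i
      fin_cases i <;> norm_num [mk, Complex.ext_iff, Matrix.cons_val_two]
    rw [this]; exact canon3
  · refine ⟨Complex.I, by simp, rotM 0 1, rotM_mem _ _ (by norm_num), ?_⟩
    have : (Complex.I) • actC (rotM 0 1) (mk ![1,0,0] ![0,1,1*(-1)]) = mk ![1,0,1] ![0,1,0] := by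
      rw [actC_mk, rotM_mulVec, rotM_mulVec]
      funext i
      fin_cases i <;> norm_num [mk, Complex.ext_iff, Matrix.cons_val_two]
    rw [this]; exact canon3
  · refine ⟨Complex.I, by simp, rotM 0 (-1), rotM_mem _ _ (by norm_num), ?_⟩
    have : (Complex.I) • actC (rotM 0 (-1)) (mk ![1,0,0] ![0,-1,-1*1]) = mk ![1,0,1] ![0,-1,0] := by
      rw [actC_mk, rotM_mulVec, rotM_mulVec]
      funext i
      fin_cases i <;> norm_num [mk, Complex.ext_iff, Matrix.cons_val_two]
    rw [this]; exact canon4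
  · refine ⟨-Complex.I, by simp, rotM 0 1, rotM_mem _ _ (by norm_num), ?_⟩
    have : (-Complex.I) • actC (rotM 0 1) (mk ![1,0,0] ![0,-1,-1*(-1)]) = mk ![1,0,1] ![0,-1,0] := by
      rw [actC_mk, rotM_mulVec, rotM_mulVec]
      funext i
      fin_cases i <;> norm_num [mk, Complex.ext_iff, Matrix.cons_val_two]
    rw [this]; exact canon4

lemma good_e3_im : Good (mk ![0,0,0] ![0,0,1]) := by
  refine good_of_eq _ _ (-Complex.I) (by simp) ?_ canon5
  funext i
  fin_cases i <;> norm_num [mk, Complex.ext_iff]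

lemma good_e3_im' : Good (mk ![0,0,0] ![0,0,-1]) := by
  refine good_of_eq _ _ (Complex.I) (by simp) ?_ canon5
  funext i
  fin_cases i <;> norm_num [mk, Complex.ext_iff]

lemma good_null_im : Good (mk ![0,0,0] ![1,0,1]) := by
  refine good_of_eq _ _ (-Complex.I) (by simp) ?_ canon6
  funext i
  fin_cases i <;> norm_num [mk, Complex.ext_iff]

lemma good_null_im' : Good (mk ![0,0,0] ![-1,0,-1]) := by
  refine good_of_eq _ _ (Complex.I) (by simp) ?_ canon6
  funext i
  fin_cases i <;> norm_num [mk, Complex.ext_iff]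

lemma good_null_line (σ α : ℝ) (hσ : σ = 1 ∨ σ = -1) :
    Good (mk ![σ,0,σ] ![α,0,α]) := by
  have hne : ((σ:ℂ) + (α:ℂ) * Complex.I) ≠ 0 := by
    intro h
    have := congrArg Complex.re h
    rcases hσ with h1 | h1 <;> simp [h1] at this
  refine good_of_eq _ _ (((σ:ℂ) + (α:ℂ) * Complex.I))⁻¹ (inv_ne_zero hne) ?_ canon6
  funext i
  fin_cases i <;>
    · simp only [mk, Pi.smul_apply, smul_eq_mul]
      rw [inv_mul_eq_iff_eq_mul₀ hne]
      norm_num [Complex.ext_iff]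
      try ring_nf
      try norm_num

lemma b23_e1 (ch sh : ℝ) : (b23 ch sh).mulVec ![1,0,0] = ![1,0,0] := by
  rw [b23_mulVec]; funext i; fin_cases i <;> norm_num [Matrix.cons_val_two]

set_option maxHeartbeats 1000000 in
lemma main_real (x y : Fin 3 → ℝ) (hd : qR x y = 0) (hba : qR y y ≤ qR x x)
    (hne : ¬(x = 0 ∧ y = 0)) : Good (mk x y) := by
  rcases lt_trichotomy 0 (qR x x) with ha | ha | ha
  · -- spacelike real part
    obtain ⟨s, hspos, hs2⟩ : ∃ s : ℝ, 0 < s ∧ s^2 = qR x x :=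
      ⟨Real.sqrt _, Real.sqrt_pos.mpr ha, Real.sq_sqrt ha.le⟩
    have hsne : s ≠ 0 := ne_of_gt hspos
    apply good_smul ((s⁻¹ : ℝ) : ℂ) (by simpa using hsne)
    rw [smul_mk]
    have hx1 : qR (s⁻¹ • x) (s⁻¹ • x) = 1 := by
      rw [qR_smul, ← hs2]; field_simp
    have hxy1 : qR (s⁻¹ • x) (s⁻¹ • y) = 0 := by
      rw [show (s⁻¹ • y) = s⁻¹ • y from rfl]
      have : qR (s⁻¹ • x) (s⁻¹ • y) = (s⁻¹)^2 * qR x y := qR_smul _ _ _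
      rw [this, hd, mul_zero]
    have hy1 : qR (s⁻¹ • y) (s⁻¹ • y) ≤ 1 := by
      rw [qR_smul, ← hx1, qR_smul]
      have : (0:ℝ) ≤ (s⁻¹)^2 := sq_nonneg _
      nlinarith
    obtain ⟨A, hA, hAx⟩ := norm_spacelike (s⁻¹ • x) hx1
    apply good_act A hA
    rw [actC_mk, hAx]
    set v := A.mulVec (s⁻¹ • y) with hvdef
    have hv0 : v 0 = 0 := by
      have h1 := qR_invariant A hA.1 (s⁻¹ • x) (s⁻¹ • y)
      rw [hAx, hxy1] at h1
      simpa [qR] using h1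
    have hvq : qR v v ≤ 1 := by
      have h1 := qR_invariant A hA.1 (s⁻¹ • y) (s⁻¹ • y)
      rw [h1]; exact hy1
    have hvform : v = ![0, v 1, v 2] := by
      funext i; fin_cases i <;> simp [hv0]
    set p := v 1 with hp
    set w := v 2 with hw
    have hvq' : p^2 - w^2 ≤ 1 := by
      have : qR v v = p^2 - w^2 := by simp [qR, hv0]; ring
      linarith [hvq, this.symm.le, this.ge]
    rw [hvform]
    rcases lt_trichotomy 0 (p^2 - w^2) with hb | hb | hb
    · -- y spacelike
      obtain ⟨r, hrpos, hr2⟩ : ∃ r : ℝ, 0 < r ∧ r^2 = p^2 - w^2 :=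
        ⟨Real.sqrt _, Real.sqrt_pos.mpr hb, Real.sq_sqrt hb.le⟩
      have hrne : r ≠ 0 := ne_of_gt hrpos
      have hr1 : r ≤ 1 := by nlinarith
      have hpne : p ≠ 0 := by intro h; rw [h] at hb; nlinarith
      rcases lt_or_gt_of_ne hpne with hpneg | hppos
      · apply good_act (b23 (-p/r) (w/r))
          (b23_mem _ _ (by field_simp; nlinarith) (div_pos (by linarith) hrpos))
        rw [actC_mk, b23_e1, b23_mulVec]
        have e : ![((![0,p,w] : Fin 3 → ℝ) 0), -p/r * (![0,p,w] 1) + w/r * (![0,p,w] 2),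
            w/r * (![0,p,w] 1) + -p/r * (![0,p,w] 2)] = ![0, -r, 0] := by
          funext i; fin_cases i <;> norm_num [Matrix.cons_val_two] <;> field_simp <;> nlinarith
        rw [e]
        exact good_of_canon _ (canon1 (-r) (by linarith) (by linarith))
      · apply good_act (b23 (p/r) (-w/r))
          (b23_mem _ _ (by field_simp; nlinarith) (div_pos (by linarith) hrpos))
        rw [actC_mk, b23_e1, b23_mulVec]
        have e : ![((![0,p,w] : Fin 3 → ℝ) 0), p/r * (![0,p,w] 1) + -w/r * (![0,p,w] 2),
            -w/r * (![0,p,w] 1) + p/r * (![0,p,w] 2)] = ![0, r, 0] := by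
          funext i; fin_cases i <;> norm_num [Matrix.cons_val_two] <;> field_simp <;> nlinarith
        rw [e]
        exact good_of_canon _ (canon1 r (by linarith) (by linarith))
    · -- y null
      rcases eq_or_ne p 0 with hp0 | hp0
      · have hw0 : w = 0 := by nlinarith
        rw [hp0, hw0]
        exact good_of_canon _ (by simpa using canon1 0 (by norm_num) (by norm_num))
      · have hwp : (w - p) * (w + p) = 0 := by nlinarith
        rcases lt_or_gt_of_ne hp0 with hpneg | hppos <;>
          rcases mul_eq_zero.mp hwp with hww | hww
        · -- p < 0, w = p : target σ = -1, τ = 1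
          have hwp' : w = p := by linarith
          apply good_act (b23 ((1+p^2)/(-2*p)) ((1-p^2)/(-2*p)))
            (b23_mem _ _ (by field_simp; ring) (div_pos (by positivity) (by linarith)))
          rw [actC_mk, b23_e1, b23_mulVec]
          have e : ![((![0,p,w] : Fin 3 → ℝ) 0),
              (1+p^2)/(-2*p) * (![0,p,w] 1) + (1-p^2)/(-2*p) * (![0,p,w] 2),
              (1-p^2)/(-2*p) * (![0,p,w] 1) + (1+p^2)/(-2*p) * (![0,p,w] 2)]
              = ![0, -1, (-1)*1] := by
            funext i; fin_cases i <;> norm_num [hwp', Matrix.cons_val_two] <;> field_simp <;> ring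
          rw [e]
          exact good_null_pm (-1) 1 (Or.inr rfl) (Or.inl rfl)
        · -- p < 0, w = -p : σ = -1, τ = -1
          have hwp' : w = -p := by linarith
          apply good_act (b23 ((1+p^2)/(-2*p)) ((p^2-1)/(-2*p)))
            (b23_mem _ _ (by field_simp; ring) (div_pos (by positivity) (by linarith)))
          rw [actC_mk, b23_e1, b23_mulVec]
          have e : ![((![0,p,w] : Fin 3 → ℝ) 0),
              (1+p^2)/(-2*p) * (![0,p,w] 1) + (p^2-1)/(-2*p) * (![0,p,w] 2),
              (p^2-1)/(-2*p) * (![0,p,w] 1) + (1+p^2)/(-2*p) * (![0,p,w] 2)]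
              = ![0, -1, (-1)*(-1)] := by
            funext i; fin_cases i <;> norm_num [hwp', Matrix.cons_val_two] <;> field_simp <;> ring
          rw [e]
          exact good_null_pm (-1) (-1) (Or.inr rfl) (Or.inr rfl)
        · -- p > 0, w = p : σ = 1, τ = 1
          have hwp' : w = p := by linarith
          apply good_act (b23 ((1+p^2)/(2*p)) ((1-p^2)/(2*p)))
            (b23_mem _ _ (by field_simp; ring) (div_pos (by positivity) (by linarith)))
          rw [actC_mk, b23_e1, b23_mulVec]
          have e : ![((![0,p,w] : Fin 3 → ℝ) 0),
              (1+p^2)/(2*p) * (![0,p,w] 1) + (1-p^2)/(2*p) * (![0,p,w] 2),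
              (1-p^2)/(2*p) * (![0,p,w] 1) + (1+p^2)/(2*p) * (![0,p,w] 2)]
              = ![0, 1, 1*1] := by
            funext i; fin_cases i <;> norm_num [hwp', Matrix.cons_val_two] <;> field_simp <;> ring
          rw [e]
          exact good_null_pm 1 1 (Or.inl rfl) (Or.inl rfl)
        · -- p > 0, w = -p : σ = 1, τ = -1
          have hwp' : w = -p := by linarith
          apply good_act (b23 ((1+p^2)/(2*p)) ((p^2-1)/(2*p)))
            (b23_mem _ _ (by field_simp; ring) (div_pos (by positivity) (by linarith)))
          rw [actC_mk, b23_e1, b23_mulVec]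
          have e : ![((![0,p,w] : Fin 3 → ℝ) 0),
              (1+p^2)/(2*p) * (![0,p,w] 1) + (p^2-1)/(2*p) * (![0,p,w] 2),
              (p^2-1)/(2*p) * (![0,p,w] 1) + (1+p^2)/(2*p) * (![0,p,w] 2)]
              = ![0, 1, 1*(-1)] := by
            funext i; fin_cases i <;> norm_num [hwp', Matrix.cons_val_two] <;> field_simp <;> ring
          rw [e]
          exact good_null_pm 1 (-1) (Or.inl rfl) (Or.inr rfl)
    · -- y timelike
      obtain ⟨r, hrpos, hr2⟩ : ∃ r : ℝ, 0 < r ∧ r^2 = w^2 - p^2 :=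
        ⟨Real.sqrt _, Real.sqrt_pos.mpr (by linarith), Real.sq_sqrt (by linarith)⟩
      have hrne : r ≠ 0 := ne_of_gt hrpos
      have hwne : w ≠ 0 := by intro h; rw [h] at hb; nlinarith
      rcases lt_or_gt_of_ne hwne with hwneg | hwpos
      · apply good_act (b23 (-w/r) (p/r))
          (b23_mem _ _ (by field_simp; nlinarith) (div_pos (by linarith) hrpos))
        rw [actC_mk, b23_e1, b23_mulVec]
        have e : ![((![0,p,w] : Fin 3 → ℝ) 0), -w/r * (![0,p,w] 1) + p/r * (![0,p,w] 2),
            p/r * (![0,p,w] 1) + -w/r * (![0,p,w] 2)] = ![0, 0, -r] := by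
          funext i; fin_cases i <;> norm_num [Matrix.cons_val_two] <;> field_simp <;> nlinarith
        rw [e]
        exact fam2 (-r) (by simpa using hrne)
      · apply good_act (b23 (w/r) (-p/r))
          (b23_mem _ _ (by field_simp; nlinarith) (div_pos (by linarith) hrpos))
        rw [actC_mk, b23_e1, b23_mulVec]
        have e : ![((![0,p,w] : Fin 3 → ℝ) 0), w/r * (![0,p,w] 1) + -p/r * (![0,p,w] 2),
            -p/r * (![0,p,w] 1) + w/r * (![0,p,w] 2)] = ![0, 0, r] := by
          funext i; fin_cases i <;> norm_num [Matrix.cons_val_two] <;> field_simp <;> nlinarith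
        rw [e]
        exact fam2 r hrne
  · -- qR x x = 0
    rcases eq_or_ne x 0 with hx0 | hx0
    · -- purely imaginary
      have hy0 : y ≠ 0 := fun h => hne ⟨hx0, h⟩
      have hb0 : qR y y ≤ 0 := by rw [← ha] at hba; exact hba
      rcases lt_or_eq_of_le hb0 with hb | hb
      · obtain ⟨s, hspos, hs2⟩ : ∃ s : ℝ, 0 < s ∧ s^2 = -(qR y y) :=
          ⟨Real.sqrt _, Real.sqrt_pos.mpr (by linarith), Real.sq_sqrt (by linarith)⟩
        have hsne : s ≠ 0 := ne_of_gt hspos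
        apply good_smul ((s⁻¹ : ℝ) : ℂ) (by simpa using hsne)
        rw [smul_mk]
        have hy1 : qR (s⁻¹ • y) (s⁻¹ • y) = -1 := by
          rw [qR_smul]
          field_simp
          nlinarith
        obtain ⟨A, hA, hAy⟩ := norm_timelike (s⁻¹ • y) hy1
        apply good_act A hA
        rw [actC_mk, hx0]
        have hz : A.mulVec (s⁻¹ • (0 : Fin 3 → ℝ)) = ![0,0,0] := by
          rw [smul_zero, Matrix.mulVec_zero]
          funext i; fin_cases i <;> rfl
        rw [hz]
        rcases hAy with h | h <;> rw [h]
        · exact good_e3_im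
        · exact good_e3_im'
      · obtain ⟨A, hA, hAy⟩ := norm_null y hb hy0
        apply good_act A hA
        rw [actC_mk, hx0]
        have hz : A.mulVec (0 : Fin 3 → ℝ) = ![0,0,0] := by
          rw [Matrix.mulVec_zero]
          funext i; fin_cases i <;> rfl
        rw [hz]
        rcases hAy with h | h <;> rw [h]
        · exact good_null_im
        · exact good_null_im'
    · -- x null nonzero
      obtain ⟨A, hA, hAx⟩ := norm_null x ha.symm hx0
      apply good_act A hA
      rw [actC_mk]
      set v := A.mulVec y with hvdef
      have hinv := qR_invariant A hA.1 x y
      have hinvy := qR_invariant A hA.1 y y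
      rcases hAx with h | h <;> rw [h]
      · have hv02 : v 0 = v 2 := by
          rw [h, hd] at hinv
          simp [qR] at hinv
          linarith
        have hv1 : v 1 = 0 := by
          have hq : qR v v ≤ 0 := by rw [hinvy]; linarith [hba, ha]
          have : qR v v = v 1 ^ 2 := by simp [qR, ← hv02]; ring
          nlinarith
        have hvform : v = ![v 0, 0, v 0] := by
          funext i; fin_cases i <;> simp [hv1, ← hv02]
        rw [hvform]
        have := good_null_line 1 (v 0) (Or.inl rfl)
        simpa using this
      · have hv02 : v 0 = v 2 := by
          rw [h, hd] at hinv
          simp [qR] at hinv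
          linarith
        have hv1 : v 1 = 0 := by
          have hq : qR v v ≤ 0 := by rw [hinvy]; linarith [hba, ha]
          have : qR v v = v 1 ^ 2 := by simp [qR, ← hv02]; ring
          nlinarith
        have hvform : v = ![v 0, 0, v 0] := by
          funext i; fin_cases i <;> simp [hv1, ← hv02]
        rw [hvform]
        have hgl := good_null_line (-1) (v 0) (Or.inr rfl)
        have e : (![(-1:ℝ),0,-1] : Fin 3 → ℝ) = ![-1,0,-1] := rfl
        simpa using hgl
  · -- qR x x < 0 : impossible
    exfalso
    obtain ⟨s, hspos, hs2⟩ : ∃ s : ℝ, 0 < s ∧ s^2 = -(qR x x) :=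
      ⟨Real.sqrt _, Real.sqrt_pos.mpr (by linarith), Real.sq_sqrt (by linarith)⟩
    have hsne : s ≠ 0 := ne_of_gt hspos
    have hx1 : qR (s⁻¹ • x) (s⁻¹ • x) = -1 := by
      rw [qR_smul]; field_simp; nlinarith
    obtain ⟨A, hA, hAx⟩ := norm_timelike (s⁻¹ • x) hx1
    have hinv := qR_invariant A hA.1 (s⁻¹ • x) y
    have hinvy := qR_invariant A hA.1 y y
    set v := A.mulVec y with hvdef
    have hv2 : v 2 = 0 := by
      have hxy : qR (s⁻¹ • x) y = 0 := by
        have : qR (s⁻¹ • x) y = s⁻¹ * qR x y := by simp [qR]; ring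
        rw [this, hd, mul_zero]
      rw [hxy] at hinv
      rcases hAx with h | h <;> rw [h] at hinv <;> simp [qR] at hinv <;> linarith
    have : qR v v ≥ 0 := by
      have : qR v v = v 0^2 + v 1^2 := by simp [qR, hv2]; ring
      nlinarith
    rw [hinvy] at this
    nlinarith

lemma qC_mk (x y : Fin 3 → ℝ) :
    qC (mk x y) (mk x y) = ((qR x x - qR y y : ℝ) : ℂ) + ((2 * qR x y : ℝ) : ℂ) * Complex.I := by
  simp only [qC, mk, qR]
  rw [Complex.ext_iff]
  constructor <;>
    simp [Complex.add_re, Complex.add_im, Complex.mul_re, Complex.mul_im, Complex.sub_re,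
      Complex.sub_im] <;> ring

lemma qC_smul (c : ℂ) (u : Fin 3 → ℂ) : qC (c • u) (c • u) = c^2 * qC u u := by
  simp only [qC, Pi.smul_apply, smul_eq_mul]
  ring

lemma mk_re_im (w : Fin 3 → ℂ) : w = mk (fun j => (w j).re) (fun j => (w j).im) := by
  funext j
  simp [mk, Complex.re_add_im]

lemma good_all (z : Fin 3 → ℂ) (hz : z ≠ 0) : Good z := by
  have key : ∀ w : Fin 3 → ℂ, w ≠ 0 → (∃ r : ℝ, 0 ≤ r ∧ qC w w = (r : ℂ)) → Good w := by
    intro w hw ⟨r, hr, hq⟩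
    rw [mk_re_im w]
    set xw := fun j => (w j).re with hxw
    set yw := fun j => (w j).im with hyw
    rw [mk_re_im w, qC_mk] at hq
    have him := congrArg Complex.im hq
    have hre := congrArg Complex.re hq
    simp at him hre
    refine main_real xw yw (by linarith) (by linarith) ?_
    rintro ⟨hx0, hy0⟩
    apply hw
    funext j
    have h1 : (w j).re = 0 := congr_fun hx0 j
    have h2 : (w j).im = 0 := congr_fun hy0 j
    exact Complex.ext h1 h2
  rcases eq_or_ne (qC z z) 0 with hQ | hQ
  · exact key z hz ⟨0, le_refl _, by simpa using hQ⟩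
  · obtain ⟨c, hc⟩ : ∃ c : ℂ, c^2 = (starRingEnd ℂ) (qC z z) :=
      IsAlgClosed.exists_pow_nat_eq _ (by norm_num : 0 < 2)
    have hcne : c ≠ 0 := by
      intro h
      rw [h] at hc
      simp at hc
      have : (starRingEnd ℂ) (qC z z) = 0 := hc.symm
      rw [map_eq_zero] at this
      exact hQ this
    apply good_smul c hcne
    apply key _ (smul_ne_zero hcne hz)
    refine ⟨Complex.normSq (qC z z), Complex.normSq_nonneg _, ?_⟩
    rw [qC_smul, hc]
    rw [mul_comm]
    exact (Complex.mul_conj (qC z z))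


theorem orbits_SOplus21_existence (z : Fin 3 → ℂ) (hz : z ≠ 0) :
    ∃ c : ℂ, c ≠ 0 ∧ ∃ A : Matrix (Fin 3) (Fin 3) ℝ, SOplus21 A ∧
      c • actC A z ∈ canonSet := by
  exact good_all z hz
end
end

section
/- Let C = { ε₁ + i·t·ε₂ : t ∈ [−1,1] } ∪ { (ε₁+ε₃) + i·( t·(ε₁+ε₃) + (ε₁−ε₃) ) : t ∈ ℝ } ∪ { ε₁+ε₃+i·ε₂, ε₁+ε₃−i·ε₂ } ∪ { ε₃ } ∪ { ε₁+ε₃ } ⊆ ℂ³. If w, w' ∈ C and there exist a nonzero complex number c and A ∈ SO⁺(2,1) with c • (A w) = w', then w = w'. (Uniqueness part of the classification of the orbits of ℂ^× · SO⁺(2,1) on ℂ³ \ {0}, Proposition A.2 of the paper.) -/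
/-!
STATEMENT 6 (Proposition A.2 of the paper, uniqueness part):
If `w, w'` in the canonical set `C` are related by some `c ∈ ℂ^×` and
`A ∈ SO⁺(2,1)`, i.e. `c • (A w) = w'`, then `w = w'`.
-/

open Matrix

noncomputable section

/-! ### Invariants -/

def Bf (w : Fin 3 → ℂ) : ℂ := w 0 ^ 2 + w 1 ^ 2 - w 2 ^ 2
def Hf (w : Fin 3 → ℂ) : ℝ :=
  Complex.normSq (w 0) + Complex.normSq (w 1) - Complex.normSq (w 2)
def qf (v : Fin 3 → ℝ) : ℝ := v 0 ^ 2 + v 1 ^ 2 - v 2 ^ 2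
def crossv (x y : Fin 3 → ℝ) : Fin 3 → ℝ :=
  ![x 1 * y 2 - x 2 * y 1, x 2 * y 0 - x 0 * y 2, -(x 0 * y 1 - x 1 * y 0)]
def vf (w : Fin 3 → ℂ) : Fin 3 → ℝ :=
  crossv (fun i => (w i).re) (fun i => (w i).im)

lemma left_inv (A : Matrix (Fin 3) (Fin 3) ℝ) (hA : SOplus21 A) : (η * Aᵀ * η) * A = 1 := by
  have h : (η * Aᵀ * η) * A = η * (Aᵀ * η * A) := by simp only [Matrix.mul_assoc]
  rw [h, hA.1, eta_sq]

lemma right_inv (A : Matrix (Fin 3) (Fin 3) ℝ) (hA : SOplus21 A) : A * (η * Aᵀ * η) = 1 :=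
  mul_eq_one_comm.mp (left_inv A hA)

lemma adj_eq (A : Matrix (Fin 3) (Fin 3) ℝ) (hA : SOplus21 A) : A.adjugate = η * Aᵀ * η := by
  have h := right_inv A hA
  calc A.adjugate = A.adjugate * (A * (η * Aᵀ * η)) := by rw [h, Matrix.mul_one]
    _ = (A.adjugate * A) * (η * Aᵀ * η) := by simp only [Matrix.mul_assoc]
    _ = η * Aᵀ * η := by rw [Matrix.adjugate_mul, hA.2.1, one_smul, Matrix.one_mul]

lemma mulvec_inj (A : Matrix (Fin 3) (Fin 3) ℝ) (hA : SOplus21 A) (v : Fin 3 → ℝ)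
    (hv : A *ᵥ v = 0) : v = 0 := by
  have := congrArg (fun u => (η * Aᵀ * η) *ᵥ u) hv
  simpa [Matrix.mulVec_mulVec, left_inv A hA] using this

lemma crossv_equiv (A : Matrix (Fin 3) (Fin 3) ℝ) (hA : SOplus21 A) (x y : Fin 3 → ℝ) :
    crossv (A *ᵥ x) (A *ᵥ y) = A *ᵥ crossv x y := by
  have hadj := adj_eq A hA
  have e : ∀ i j, A.adjugate i j = (η * Aᵀ * η) i j := fun i j => by rw [hadj]
  have e00 := e 0 0; have e01 := e 0 1; have e02 := e 0 2
  have e10 := e 1 0; have e11 := e 1 1; have e12 := e 1 2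
  have e20 := e 2 0; have e21 := e 2 1; have e22 := e 2 2
  simp [η, Matrix.adjugate_fin_three, Matrix.mul_apply, Fin.sum_univ_three, Matrix.diagonal,
    Matrix.transpose_apply] at e00 e01 e02 e10 e11 e12 e20 e21 e22
  funext i
  fin_cases i <;>
    simp [crossv, Matrix.mulVec, dotProduct, Fin.sum_univ_three]
  · linear_combination (x 1 * y 2 - x 2 * y 1) * e00 + (x 2 * y 0 - x 0 * y 2) * e10 +
      (x 0 * y 1 - x 1 * y 0) * e20
  · linear_combination (x 1 * y 2 - x 2 * y 1) * e01 + (x 2 * y 0 - x 0 * y 2) * e11 +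
      (x 0 * y 1 - x 1 * y 0) * e21
  · linear_combination (-(x 1 * y 2 - x 2 * y 1)) * e02 + (-(x 2 * y 0 - x 0 * y 2)) * e12 +
      (-(x 0 * y 1 - x 1 * y 0)) * e22

lemma qf_mulVec (A : Matrix (Fin 3) (Fin 3) ℝ) (hA : SOplus21 A) (v : Fin 3 → ℝ) :
    qf (A *ᵥ v) = qf v := by
  have e : ∀ i j, (Aᵀ * η * A) i j = η i j := fun i j => by rw [hA.1]
  have e00 := e 0 0; have e01 := e 0 1; have e02 := e 0 2
  have e11 := e 1 1; have e12 := e 1 2; have e22 := e 2 2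
  simp [η, Matrix.mul_apply, Fin.sum_univ_three, Matrix.diagonal, Matrix.transpose_apply]
    at e00 e01 e02 e11 e12 e22
  simp only [qf, Matrix.mulVec, dotProduct, Fin.sum_univ_three]
  linear_combination (v 0)^2 * e00 + (v 1)^2 * e11 + (v 2)^2 * e22 +
    (2 * v 0 * v 1) * e01 + (2 * v 0 * v 2) * e02 + (2 * v 1 * v 2) * e12

lemma Bf_actC (A : Matrix (Fin 3) (Fin 3) ℝ) (hA : SOplus21 A) (w : Fin 3 → ℂ) :
    Bf (actC A w) = Bf w := by
  have e : ∀ i j, (Aᵀ * η * A) i j = η i j := fun i j => by rw [hA.1]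
  have e00 := e 0 0; have e01 := e 0 1; have e02 := e 0 2
  have e11 := e 1 1; have e12 := e 1 2; have e22 := e 2 2
  simp [η, Matrix.mul_apply, Fin.sum_univ_three, Matrix.diagonal, Matrix.transpose_apply]
    at e00 e01 e02 e11 e12 e22
  have c00 : (A 0 0:ℂ) * A 0 0 + A 1 0 * A 1 0 - A 2 0 * A 2 0 = 1 := by
    exact_mod_cast (by linarith [e00] :
      A 0 0 * A 0 0 + A 1 0 * A 1 0 - A 2 0 * A 2 0 = (1:ℝ))
  have c11 : (A 0 1:ℂ) * A 0 1 + A 1 1 * A 1 1 - A 2 1 * A 2 1 = 1 := by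
    exact_mod_cast (by linarith [e11] :
      A 0 1 * A 0 1 + A 1 1 * A 1 1 - A 2 1 * A 2 1 = (1:ℝ))
  have c22 : (A 0 2:ℂ) * A 0 2 + A 1 2 * A 1 2 - A 2 2 * A 2 2 = -1 := by
    exact_mod_cast (by linarith [e22] :
      A 0 2 * A 0 2 + A 1 2 * A 1 2 - A 2 2 * A 2 2 = (-1:ℝ))
  have c01 : (A 0 0:ℂ) * A 0 1 + A 1 0 * A 1 1 - A 2 0 * A 2 1 = 0 := by
    exact_mod_cast (by linarith [e01] :
      A 0 0 * A 0 1 + A 1 0 * A 1 1 - A 2 0 * A 2 1 = (0:ℝ))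
  have c02 : (A 0 0:ℂ) * A 0 2 + A 1 0 * A 1 2 - A 2 0 * A 2 2 = 0 := by
    exact_mod_cast (by linarith [e02] :
      A 0 0 * A 0 2 + A 1 0 * A 1 2 - A 2 0 * A 2 2 = (0:ℝ))
  have c12 : (A 0 1:ℂ) * A 0 2 + A 1 1 * A 1 2 - A 2 1 * A 2 2 = 0 := by
    exact_mod_cast (by linarith [e12] :
      A 0 1 * A 0 2 + A 1 1 * A 1 2 - A 2 1 * A 2 2 = (0:ℝ))
  simp only [Bf, actC, Matrix.mulVec, dotProduct, Fin.sum_univ_three, Matrix.map_apply]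
  linear_combination (w 0)^2 * c00 + (w 1)^2 * c11 + (w 2)^2 * c22 +
    (2 * w 0 * w 1) * c01 + (2 * w 0 * w 2) * c02 + (2 * w 1 * w 2) * c12

lemma actC_re (A : Matrix (Fin 3) (Fin 3) ℝ) (w : Fin 3 → ℂ) :
    (fun i => (actC A w i).re) = A *ᵥ (fun i => (w i).re) := by
  funext i
  simp [actC, Matrix.mulVec, dotProduct, Fin.sum_univ_three, Matrix.map_apply,
    Complex.add_re, Complex.mul_re]

lemma actC_im (A : Matrix (Fin 3) (Fin 3) ℝ) (w : Fin 3 → ℂ) :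
    (fun i => (actC A w i).im) = A *ᵥ (fun i => (w i).im) := by
  funext i
  simp [actC, Matrix.mulVec, dotProduct, Fin.sum_univ_three, Matrix.map_apply,
    Complex.add_im, Complex.mul_im]

lemma future (A : Matrix (Fin 3) (Fin 3) ℝ) (hA : SOplus21 A) (v : Fin 3 → ℝ)
    (hq : qf v ≤ 0) (hv : 0 < v 2) : 0 < (A *ᵥ v) 2 := by
  have hR := right_inv A hA
  have hrow : A 2 0 * A 2 0 + A 2 1 * A 2 1 - A 2 2 * A 2 2 = -1 := by
    have h : (A * (η * Aᵀ * η)) 2 2 = (1 : Matrix (Fin 3) (Fin 3) ℝ) 2 2 := by rw [hR]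
    simp [η, Matrix.mul_apply, Fin.sum_univ_three, Matrix.diagonal, Matrix.transpose_apply,
      Matrix.one_apply] at h
    linarith
  have h22 := hA.2.2
  have hq' : v 0 ^ 2 + v 1 ^ 2 - v 2 ^ 2 ≤ 0 := hq
  simp only [Matrix.mulVec, dotProduct, Fin.sum_univ_three]
  nlinarith [sq_nonneg (A 2 0 * v 1 - A 2 1 * v 0), sq_nonneg (A 2 0 * v 0 + A 2 1 * v 1),
    mul_pos h22 hv, sq_nonneg (A 2 0 * v 0 + A 2 1 * v 1 + A 2 2 * v 2), sq_nonneg (v 2)]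

/-! ### Behaviour of the invariants under scaling -/

lemma Bf_smul (c : ℂ) (z : Fin 3 → ℂ) : Bf (c • z) = c ^ 2 * Bf z := by
  simp only [Bf, Pi.smul_apply, smul_eq_mul]; ring

lemma Hf_smul (c : ℂ) (z : Fin 3 → ℂ) : Hf (c • z) = Complex.normSq c * Hf z := by
  simp only [Hf, Pi.smul_apply, smul_eq_mul, Complex.normSq_mul]; ring

lemma Hf_eq (z : Fin 3 → ℂ) :
    Hf z = qf (fun i => (z i).re) + qf (fun i => (z i).im) := by
  simp only [Hf, qf, Complex.normSq_apply]; ring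

lemma Hf_actC (A : Matrix (Fin 3) (Fin 3) ℝ) (hA : SOplus21 A) (w : Fin 3 → ℂ) :
    Hf (actC A w) = Hf w := by
  rw [Hf_eq, Hf_eq w, actC_re, actC_im, qf_mulVec A hA, qf_mulVec A hA]

lemma vf_smul (c : ℂ) (z : Fin 3 → ℂ) : vf (c • z) = Complex.normSq c • vf z := by
  funext i
  fin_cases i <;>
    simp [vf, crossv, Pi.smul_apply, smul_eq_mul, Complex.mul_re, Complex.mul_im,
      Complex.normSq_apply] <;> ring

lemma vf_actC (A : Matrix (Fin 3) (Fin 3) ℝ) (hA : SOplus21 A) (w : Fin 3 → ℂ) :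
    vf (actC A w) = A *ᵥ vf w := by
  unfold vf
  rw [actC_re, actC_im, crossv_equiv A hA]

lemma qf_smul (k : ℝ) (v : Fin 3 → ℝ) : qf (k • v) = k ^ 2 * qf v := by
  simp only [qf, Pi.smul_apply, smul_eq_mul]; ring

/-! ### Master transport lemma -/

lemma master (c : ℂ) (A : Matrix (Fin 3) (Fin 3) ℝ) (w w' : Fin 3 → ℂ)
    (hc : c ≠ 0) (hA : SOplus21 A) (h : c • actC A w = w') :
    Bf w' = c ^ 2 * Bf w ∧
    Hf w' = Complex.normSq c * Hf w ∧
    qf (vf w') = Complex.normSq c ^ 2 * qf (vf w) ∧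
    Complex.normSq (Bf w') = Complex.normSq c ^ 2 * Complex.normSq (Bf w) ∧
    (vf w = 0 → vf w' = 0) ∧
    (vf w' = 0 → vf w = 0) ∧
    (qf (vf w) ≤ 0 → 0 < vf w 2 → 0 < vf w' 2) ∧
    (qf (vf w) ≤ 0 → vf w 2 < 0 → vf w' 2 < 0) := by
  subst h
  have hk : 0 < Complex.normSq c := Complex.normSq_pos.mpr hc
  have hB : Bf (c • actC A w) = c ^ 2 * Bf w := by rw [Bf_smul, Bf_actC A hA]
  have hH : Hf (c • actC A w) = Complex.normSq c * Hf w := by rw [Hf_smul, Hf_actC A hA]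
  have hv : vf (c • actC A w) = Complex.normSq c • (A *ᵥ vf w) := by
    rw [vf_smul, vf_actC A hA]
  refine ⟨hB, hH, ?_, ?_, ?_, ?_, ?_, ?_⟩
  · rw [hv, qf_smul, qf_mulVec A hA]
  · rw [hB, Complex.normSq_mul, map_pow]
  · intro h0
    rw [hv, h0, Matrix.mulVec_zero, smul_zero]
  · intro h0
    rw [hv] at h0
    rcases smul_eq_zero.mp h0 with h1 | h1
    · exact absurd h1 (ne_of_gt hk)
    · exact mulvec_inj A hA _ h1
  · intro hq0 h2
    have := future A hA (vf w) hq0 h2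
    rw [hv]
    simpa using mul_pos hk this
  · intro hq0 h2
    have hq0' : qf (-(vf w)) ≤ 0 := by simpa [qf] using hq0
    have h2' : 0 < (-(vf w)) 2 := by simpa using h2
    have := future A hA (-(vf w)) hq0' h2'
    rw [Matrix.mulVec_neg] at this
    rw [hv]
    simp only [Pi.smul_apply, smul_eq_mul, Pi.neg_apply] at this ⊢
    nlinarith

/-! ### Invariant values on the canonical set -/

lemma B1 (t : ℝ) : Bf (ε₁ + (Complex.I * (t : ℂ)) • ε₂) = 1 - (t:ℂ)^2 := by
  simp [Bf, ε₁, ε₂]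
  ring_nf
  simp [Complex.I_sq]
  ring

lemma H1 (t : ℝ) : Hf (ε₁ + (Complex.I * (t : ℂ)) • ε₂) = 1 + t^2 := by
  simp [Hf, ε₁, ε₂, Complex.normSq_apply]
  ring

lemma v1 (t : ℝ) : vf (ε₁ + (Complex.I * (t : ℂ)) • ε₂) = ![0, 0, -t] := by
  funext i
  fin_cases i <;> simp [vf, crossv, ε₁, ε₂]

lemma q1 (t : ℝ) : qf (vf (ε₁ + (Complex.I * (t : ℂ)) • ε₂)) = -t^2 := by
  rw [v1]; simp [qf]

lemma B2 (t : ℝ) : Bf (((ε₁ + ε₃) + Complex.I • ((t : ℂ) • (ε₁ + ε₃) + (ε₁ - ε₃)))) = -4*t + 4*Complex.I := by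
  simp [Bf, ε₁, ε₃]
  ring_nf
  simp [Complex.I_sq]
  ring

lemma H2 (t : ℝ) : Hf (((ε₁ + ε₃) + Complex.I • ((t : ℂ) • (ε₁ + ε₃) + (ε₁ - ε₃)))) = 4*t := by
  simp [Hf, ε₁, ε₃, Complex.normSq_apply]
  ring

lemma v2l (t : ℝ) : vf (((ε₁ + ε₃) + Complex.I • ((t : ℂ) • (ε₁ + ε₃) + (ε₁ - ε₃)))) = ![0, 2, 0] := by
  funext i
  fin_cases i <;> simp [vf, crossv, ε₁, ε₃] <;> ring

lemma q2 (t : ℝ) : qf (vf (((ε₁ + ε₃) + Complex.I • ((t : ℂ) • (ε₁ + ε₃) + (ε₁ - ε₃))))) = 4 := by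
  rw [v2l]; simp [qf]; norm_num

lemma nB2 (t : ℝ) : Complex.normSq (Bf (((ε₁ + ε₃) + Complex.I • ((t : ℂ) • (ε₁ + ε₃) + (ε₁ - ε₃))))) = 16*(t^2+1) := by
  rw [B2]
  simp [Complex.normSq_apply]
  ring

lemma B3 : Bf (ε₁ + ε₃ + Complex.I • ε₂) = -1 := by
  simp [Bf, ε₁, ε₂, ε₃]

lemma H3 : Hf (ε₁ + ε₃ + Complex.I • ε₂) = 1 := by
  simp [Hf, ε₁, ε₂, ε₃, Complex.normSq_apply]

lemma v3 : vf (ε₁ + ε₃ + Complex.I • ε₂) = ![-1, 0, -1] := by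
  funext i
  fin_cases i <;> simp [vf, crossv, ε₁, ε₂, ε₃]

lemma q3 : qf (vf (ε₁ + ε₃ + Complex.I • ε₂)) = 0 := by
  rw [v3]; simp [qf]

lemma B4 : Bf (ε₁ + ε₃ - Complex.I • ε₂) = -1 := by
  simp [Bf, ε₁, ε₂, ε₃]

lemma H4 : Hf (ε₁ + ε₃ - Complex.I • ε₂) = 1 := by
  simp [Hf, ε₁, ε₂, ε₃, Complex.normSq_apply]

lemma v4 : vf (ε₁ + ε₃ - Complex.I • ε₂) = ![1, 0, 1] := by
  funext i
  fin_cases i <;> simp [vf, crossv, ε₁, ε₂, ε₃]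

lemma q4 : qf (vf (ε₁ + ε₃ - Complex.I • ε₂)) = 0 := by
  rw [v4]; simp [qf]

lemma H5 : Hf ε₃ = -1 := by
  simp [Hf, ε₃, Complex.normSq_apply]

lemma v5 : vf ε₃ = 0 := by
  funext i
  fin_cases i <;> simp [vf, crossv, ε₃]

lemma q5 : qf (vf ε₃) = 0 := by rw [v5]; simp [qf]

lemma H6 : Hf (ε₁ + ε₃) = 0 := by
  simp [Hf, ε₁, ε₃, Complex.normSq_apply]

lemma v6 : vf (ε₁ + ε₃) = 0 := by
  funext i
  fin_cases i <;> simp [vf, crossv, ε₁, ε₃]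

lemma q6 : qf (vf (ε₁ + ε₃)) = 0 := by rw [v6]; simp [qf]

theorem orbits_SOplus21_uniqueness (w w' : Fin 3 → ℂ)
    (hw : w ∈ canonSet) (hw' : w' ∈ canonSet)
    (h : ∃ c : ℂ, c ≠ 0 ∧ ∃ A : Matrix (Fin 3) (Fin 3) ℝ, SOplus21 A ∧
      c • actC A w = w') :
    w = w' := by
  obtain ⟨c, hc, A, hA, hact⟩ := h
  obtain ⟨hB, hH, hq, hnB, hz, hz', hpos, hneg⟩ := master c A w w' hc hA hact
  have hk : 0 < Complex.normSq c := Complex.normSq_pos.mpr hc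
  simp only [canonSet, Set.mem_setOf_eq] at hw hw'
  rcases hw with ⟨t, ht, rfl⟩ | ⟨t, rfl⟩ | rfl | rfl | rfl | rfl
  · -- w in family 1
    rcases hw' with ⟨s, hs, rfl⟩ | ⟨s, rfl⟩ | rfl | rfl | rfl | rfl
    · -- (1,1)
      rw [q1 s, q1 t] at hq
      rw [H1 s, H1 t] at hH
      suffices hts : t = s by rw [hts]
      rcases eq_or_ne t 0 with rfl | ht0
      · have hs0 : s = 0 := by nlinarith [sq_nonneg s, hk]
        rw [hs0]
      · have hqle : qf (vf (ε₁ + (Complex.I * (t : ℂ)) • ε₂)) ≤ 0 := by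
          rw [q1 t]; nlinarith [sq_nonneg t]
        have hprod : (s - Complex.normSq c * t) * (s + Complex.normSq c * t) = 0 := by
          linear_combination -hq
        have hst : s = Complex.normSq c * t := by
          rcases lt_or_gt_of_ne ht0 with htn | htp
          · have h2 : 0 < vf (ε₁ + (Complex.I * (t : ℂ)) • ε₂) 2 := by
              rw [v1 t]; simp; linarith
            have h2' := hpos hqle h2
            rw [v1 s] at h2'; simp at h2'
            rcases mul_eq_zero.mp hprod with h1 | h1
            · linarith
            · exfalso; nlinarith [mul_pos hk (neg_pos.mpr htn)]
          · have h2 : vf (ε₁ + (Complex.I * (t : ℂ)) • ε₂) 2 < 0 := by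
              rw [v1 t]; simp; linarith
            have h2' := hneg hqle h2
            rw [v1 s] at h2'; simp at h2'
            rcases mul_eq_zero.mp hprod with h1 | h1
            · linarith
            · exfalso; nlinarith [mul_pos hk htp]
        have hfact : (Complex.normSq c - 1) * (Complex.normSq c * t ^ 2 - 1) = 0 := by
          linear_combination hH - (s + Complex.normSq c * t) * hst
        rcases mul_eq_zero.mp hfact with h1 | h1
        · have hK1 : Complex.normSq c = 1 := by linarith
          rw [hK1, one_mul] at hst; exact hst.symm
        · have hKt : Complex.normSq c * t ^ 2 = 1 := by linarith
          have ht2 : t ^ 2 ≤ 1 := by nlinarith [ht.1, ht.2]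
          have hK2 : 1 ≤ Complex.normSq c := by
            nlinarith [mul_nonneg hk.le (sub_nonneg.mpr ht2)]
          have hKs : s ^ 2 = Complex.normSq c := by
            linear_combination (s + Complex.normSq c * t) * hst + Complex.normSq c * hKt
          have hs2 : s ^ 2 ≤ 1 := by nlinarith [hs.1, hs.2]
          have hK1 : Complex.normSq c ≤ 1 := by linarith
          have hK : Complex.normSq c = 1 := le_antisymm hK1 hK2
          rw [hK, one_mul] at hst; exact hst.symm
    · -- (1,2)
      exfalso; rw [q2 s, q1 t] at hq
      nlinarith [hq, hk, sq_nonneg t, sq_nonneg (Complex.normSq c)]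
    · -- (1,3)
      exfalso; rw [q3, q1 t] at hq
      have ht2 : Complex.normSq c ^ 2 * t ^ 2 = 0 := by linarith
      have ht0 : t = 0 := by
        rcases mul_eq_zero.mp ht2 with h1 | h1
        · exfalso; nlinarith
        · exact (pow_eq_zero_iff (two_ne_zero)).mp h1
      subst ht0
      have hv0 : vf (ε₁ + (Complex.I * ((0:ℝ) : ℂ)) • ε₂) = 0 := by
        rw [v1 0]; funext i; fin_cases i <;> simp
      have := hz hv0
      rw [v3] at this
      have h0 := congrFun this 0
      simp at h0
    · -- (1,4)
      exfalso; rw [q4, q1 t] at hq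
      have ht2 : Complex.normSq c ^ 2 * t ^ 2 = 0 := by linarith
      have ht0 : t = 0 := by
        rcases mul_eq_zero.mp ht2 with h1 | h1
        · exfalso; nlinarith
        · exact (pow_eq_zero_iff (two_ne_zero)).mp h1
      subst ht0
      have hv0 : vf (ε₁ + (Complex.I * ((0:ℝ) : ℂ)) • ε₂) = 0 := by
        rw [v1 0]; funext i; fin_cases i <;> simp
      have := hz hv0
      rw [v4] at this
      have h0 := congrFun this 0
      simp at h0
    · -- (1,5)
      exfalso; rw [H5, H1 t] at hH
      nlinarith [sq_nonneg t]
    · -- (1,6)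
      exfalso; rw [H6, H1 t] at hH
      nlinarith [sq_nonneg t]
  · -- w in family 2
    rcases hw' with ⟨s, hs, rfl⟩ | ⟨s, rfl⟩ | rfl | rfl | rfl | rfl
    · -- (2,1)
      exfalso; rw [q1 s, q2 t] at hq
      nlinarith [hq, hk, sq_nonneg s]
    · -- (2,2)
      rw [H2 s, H2 t] at hH
      rw [nB2 s, nB2 t] at hnB
      suffices hts : t = s by rw [hts]
      have hst : s = Complex.normSq c * t := by linarith
      have hs2 : s ^ 2 = Complex.normSq c ^ 2 * t ^ 2 := by
        linear_combination (s + Complex.normSq c * t) * hst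
      have hK2 : Complex.normSq c ^ 2 = 1 := by nlinarith [hnB, hs2]
      have hK : Complex.normSq c = 1 := by nlinarith [hK2, hk]
      rw [hK, one_mul] at hst; exact hst.symm
    · -- (2,3)
      exfalso; rw [q3, q2 t] at hq; nlinarith
    · -- (2,4)
      exfalso; rw [q4, q2 t] at hq; nlinarith
    · -- (2,5)
      exfalso; rw [q5, q2 t] at hq; nlinarith
    · -- (2,6)
      exfalso; rw [q6, q2 t] at hq; nlinarith
  · -- w = case 3
    rcases hw' with ⟨s, hs, rfl⟩ | ⟨s, rfl⟩ | rfl | rfl | rfl | rfl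
    · -- (3,1)
      exfalso; rw [q1 s, q3] at hq
      have hs0 : s = 0 := by nlinarith [sq_nonneg s]
      subst hs0
      have hv0 : vf (ε₁ + (Complex.I * ((0:ℝ) : ℂ)) • ε₂) = 0 := by
        rw [v1 0]; funext i; fin_cases i <;> simp
      have := hz' hv0
      rw [v3] at this
      have h0 := congrFun this 0
      simp at h0
    · -- (3,2)
      exfalso; rw [q2 s, q3] at hq; nlinarith
    · -- (3,3)
      rfl
    · -- (3,4)
      exfalso
      have hqle : qf (vf (ε₁ + ε₃ + Complex.I • ε₂)) ≤ 0 := by rw [q3]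
      have h2 : vf (ε₁ + ε₃ + Complex.I • ε₂) 2 < 0 := by rw [v3]; change (-1:ℝ) < 0; norm_num
      have h2' := hneg hqle h2
      rw [v4] at h2'; change (1:ℝ) < 0 at h2'; norm_num at h2'
    · -- (3,5)
      exfalso; rw [H5, H3] at hH; nlinarith
    · -- (3,6)
      exfalso; rw [H6, H3] at hH; nlinarith
  · -- w = case 4
    rcases hw' with ⟨s, hs, rfl⟩ | ⟨s, rfl⟩ | rfl | rfl | rfl | rfl
    · -- (4,1)
      exfalso; rw [q1 s, q4] at hq
      have hs0 : s = 0 := by nlinarith [sq_nonneg s]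
      subst hs0
      have hv0 : vf (ε₁ + (Complex.I * ((0:ℝ) : ℂ)) • ε₂) = 0 := by
        rw [v1 0]; funext i; fin_cases i <;> simp
      have := hz' hv0
      rw [v4] at this
      have h0 := congrFun this 0
      simp at h0
    · -- (4,2)
      exfalso; rw [q2 s, q4] at hq; nlinarith
    · -- (4,3)
      exfalso
      have hqle : qf (vf (ε₁ + ε₃ - Complex.I • ε₂)) ≤ 0 := by rw [q4]
      have h2 : 0 < vf (ε₁ + ε₃ - Complex.I • ε₂) 2 := by rw [v4]; change (0:ℝ) < 1; norm_num
      have h2' := hpos hqle h2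
      rw [v3] at h2'; change (0:ℝ) < -1 at h2'; norm_num at h2'
    · -- (4,4)
      rfl
    · -- (4,5)
      exfalso; rw [H5, H4] at hH; nlinarith
    · -- (4,6)
      exfalso; rw [H6, H4] at hH; nlinarith
  · -- w = case 5
    rcases hw' with ⟨s, hs, rfl⟩ | ⟨s, rfl⟩ | rfl | rfl | rfl | rfl
    · -- (5,1)
      exfalso; rw [H1 s, H5] at hH; nlinarith [sq_nonneg s]
    · -- (5,2)
      exfalso; rw [q2 s, q5] at hq; nlinarith
    · -- (5,3)
      exfalso; rw [H3, H5] at hH; nlinarith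
    · -- (5,4)
      exfalso; rw [H4, H5] at hH; nlinarith
    · -- (5,5)
      rfl
    · -- (5,6)
      exfalso; rw [H6, H5] at hH; nlinarith
  · -- w = case 6
    rcases hw' with ⟨s, hs, rfl⟩ | ⟨s, rfl⟩ | rfl | rfl | rfl | rfl
    · -- (6,1)
      exfalso; rw [H1 s, H6] at hH; nlinarith [sq_nonneg s]
    · -- (6,2)
      exfalso; rw [q2 s, q6] at hq; nlinarith
    · -- (6,3)
      exfalso; rw [H3, H6] at hH; nlinarith
    · -- (6,4)
      exfalso; rw [H4, H6] at hH; nlinarith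
    · -- (6,5)
      exfalso; rw [H5, H6] at hH; nlinarith
    · -- (6,6)
      rfl
end
end

section
/- Let t ∈ (−1,1) with t ≠ 0. If c is a nonzero complex number, A ∈ SO⁺(2,1), and c • (A (ε₁ + i·t·ε₂)) = ε₁ + i·t·ε₂, then either c = 1 and A is the identity matrix, or c = −1 and A = diag(−1,−1,1). (Stabilizer computation for the generic canonical forms ε₁ + i t ε₂ in Proposition A.2: their stabilizer in ℂ^× × SO⁺(2,1) is a group of order two, so the corresponding Lie algebra 𝔫♯ equals ℂ.) -/
/-!
STATEMENT 7 (Proposition A.2 of the paper, stabilizer of the generic canonical forms):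
Let `t ∈ (−1,1)`, `t ≠ 0`. If `c ≠ 0` complex, `A ∈ SO⁺(2,1)`, and
`c • (A (ε₁ + i·t·ε₂)) = ε₁ + i·t·ε₂`, then either `c = 1` and `A = 1`,
or `c = −1` and `A = diag(−1,−1,1)`.
-/

open Matrix

noncomputable section

set_option maxHeartbeats 1000000

theorem stabilizer_generic_SOplus21 (t : ℝ) (ht : t ∈ Set.Ioo (-1 : ℝ) 1) (ht0 : t ≠ 0)
    (c : ℂ) (hc : c ≠ 0) (A : Matrix (Fin 3) (Fin 3) ℝ) (hA : SOplus21 A)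
    (h : c • actC A (ε₁ + (Complex.I * (t : ℂ)) • ε₂) = ε₁ + (Complex.I * (t : ℂ)) • ε₂) :
    (c = 1 ∧ A = 1) ∨ (c = -1 ∧ A = Matrix.diagonal ![-1, -1, 1]) := by
  obtain ⟨hη, hdet, h33⟩ := hA
  have h0 := congrFun h 0
  have h1 := congrFun h 1
  have h2 := congrFun h 2
  simp [actC, ε₁, ε₂, Matrix.mulVec, dotProduct, Fin.sum_univ_three,
    Matrix.map_apply] at h0 h1 h2
  replace h2 := h2.resolve_left hc
  rw [Complex.ext_iff] at h0 h1 h2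
  obtain ⟨r0, i0⟩ := h0
  obtain ⟨r1, i1⟩ := h1
  obtain ⟨r2, i2⟩ := h2
  simp [Complex.mul_re, Complex.mul_im, Complex.add_re, Complex.add_im] at r0 i0 r1 i1 r2 i2
  replace i2 : A 2 1 = 0 := i2.resolve_right ht0
  have e00 := congrFun (congrFun hη 0) 0
  have e01 := congrFun (congrFun hη 0) 1
  have e11 := congrFun (congrFun hη 1) 1
  have e02 := congrFun (congrFun hη 0) 2
  have e12 := congrFun (congrFun hη 1) 2
  have e22 := congrFun (congrFun hη 2) 2
  simp [η, Matrix.mul_apply, Matrix.diagonal, Fin.sum_univ_three, r2, i2] at e00 e01 e11 e02 e12 e22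
  clear h hη hdet
  set a := c.re with ha
  set b := c.im with hb
  have hs : 0 < a ^ 2 + b ^ 2 := by
    rcases Complex.ext_iff.not.mp hc with h'
    have h1 : a ≠ 0 ∨ b ≠ 0 := by
      by_contra hcon
      push_neg at hcon
      exact hc (Complex.ext hcon.1 hcon.2)
    rcases h1 with h1 | h1 <;> positivity
  have k00 : (a ^ 2 + b ^ 2) * A 0 0 = a := by linear_combination a * r0 + b * i0
  have k01 : (a ^ 2 + b ^ 2) * (t * A 0 1) = -b := by linear_combination a * i0 - b * r0
  have k10 : (a ^ 2 + b ^ 2) * A 1 0 = b * t := by linear_combination a * r1 + b * i1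
  have k11 : (a ^ 2 + b ^ 2) * (t * A 1 1) = a * t := by linear_combination a * i1 - b * r1
  have k1 : a ^ 2 + b ^ 2 * t ^ 2 = (a ^ 2 + b ^ 2) ^ 2 := by
    linear_combination (-(((a ^ 2 + b ^ 2)) * A 0 0 + a)) * k00 +
      (-(((a ^ 2 + b ^ 2)) * A 1 0 + b * t)) * k10 + ((a ^ 2 + b ^ 2)) ^ 2 * e00
  have k2 : b ^ 2 + a ^ 2 * t ^ 2 = (a ^ 2 + b ^ 2) ^ 2 * t ^ 2 := by
    linear_combination (-(((a ^ 2 + b ^ 2)) * (t * A 0 1) - b)) * k01 +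
      (-(((a ^ 2 + b ^ 2)) * (t * A 1 1) + a * t)) * k11 + ((a ^ 2 + b ^ 2)) ^ 2 * t ^ 2 * e11
  have ht2 : t ^ 2 < 1 := by nlinarith [ht.1, ht.2]
  have hbz : b = 0 := by
    have key : b ^ 2 * (1 - t ^ 4) = 0 := by linear_combination k2 - t ^ 2 * k1
    have : 0 < 1 - t ^ 4 := by
      have e : 1 - t ^ 4 = (1 - t ^ 2) * (1 + t ^ 2) := by ring
      rw [e]
      have : (0:ℝ) < 1 + t ^ 2 := by positivity
      nlinarith [ht2, this]
    have hb2 : b ^ 2 = 0 := by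
      rcases mul_eq_zero.mp key with h' | h'
      · exact h'
      · linarith
    exact pow_eq_zero_iff (by norm_num) |>.mp hb2
  have haz : a ≠ 0 := by
    intro h'
    exact hc (Complex.ext h' hbz)
  have ha2 : a ^ 2 = 1 := by
    have : a ^ 2 * (a ^ 2 - 1) = 0 := by
      rw [hbz] at k1; nlinarith [k1]
    rcases mul_eq_zero.mp this with h' | h'
    · exact absurd (pow_eq_zero_iff (by norm_num) |>.mp h') haz
    · linarith
  have hs1 : a ^ 2 + b ^ 2 = 1 := by rw [hbz, ha2]; ring
  have hA00 : A 0 0 = a := by linear_combination k00 - A 0 0 * hs1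
  have hA01 : A 0 1 = 0 := by
    have h' : t * A 0 1 = 0 := by linear_combination k01 - (t * A 0 1) * hs1 - hbz
    rcases mul_eq_zero.mp h' with h'' | h''
    · exact absurd h'' ht0
    · exact h''
  have hA10 : A 1 0 = 0 := by linear_combination k10 - A 1 0 * hs1 + t * hbz
  have hA11 : A 1 1 = a := by
    have h' : t * A 1 1 = t * a := by linear_combination k11 - (t * A 1 1) * hs1
    exact mul_left_cancel₀ ht0 h'
  have hA02 : A 0 2 = 0 := by
    have h' : a * A 0 2 = 0 := by linear_combination e02 - A 0 2 * hA00 - A 1 2 * hA10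
    rcases mul_eq_zero.mp h' with h'' | h''
    · exact absurd h'' haz
    · exact h''
  have hA12 : A 1 2 = 0 := by
    have h' : a * A 1 2 = 0 := by linear_combination e12 - A 0 2 * hA01 - A 1 2 * hA11
    rcases mul_eq_zero.mp h' with h'' | h''
    · exact absurd h'' haz
    · exact h''
  have hA22 : A 2 2 = 1 := by
    have h' : (A 2 2 - 1) * (A 2 2 + 1) = 0 := by
      linear_combination -e22 + (A 0 2 + A 1 2) * hA02 + (A 1 2 - A 0 2) * hA12
    rcases mul_eq_zero.mp h' with h'' | h''
    · linarith
    · linarith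
  have hcase : a = 1 ∨ a = -1 := by
    have h' : (a - 1) * (a + 1) = 0 := by linear_combination ha2
    rcases mul_eq_zero.mp h' with h'' | h''
    · left; linarith
    · right; linarith
  rcases hcase with h' | h'
  · left
    constructor
    · apply Complex.ext <;> simp [← ha, ← hb, h', hbz]
    · ext i j
      fin_cases i <;> fin_cases j <;>
        simp [Matrix.one_apply, hA00, hA01, hA02, hA10, hA11, hA12, r2, i2, hA22, h']
  · right
    constructor
    · apply Complex.ext <;> simp [← ha, ← hb, h', hbz]
    · ext i j
      fin_cases i <;> fin_cases j <;>
        simp [Matrix.diagonal, hA00, hA01, hA02, hA10, hA11, hA12, r2, i2, hA22, h']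
end
end

section
/- If c is a nonzero complex number, A ∈ SO⁺(2,1), and c • (A ε₃) = ε₃ (where ε₃ ∈ ℂ³), then c = 1, A ε₃ = ε₃, and there exists φ ∈ ℝ such that A = [[cos φ, −sin φ, 0], [sin φ, cos φ, 0], [0, 0, 1]]. (The stabilizer of the time-like canonical form ε₃ in ℂ^× × SO⁺(2,1) is the rotation group SO(2), as asserted in Proposition A.2 and Table 3 of the paper.) -/
/-!
STATEMENT 10 (Proposition A.2 and Table 3 of the paper):
The stabilizer of the time-like canonical form `ε₃` in `ℂ^× × SO⁺(2,1)` is the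
rotation group `SO(2)`.
-/

open Matrix

noncomputable section

set_option maxHeartbeats 1000000 in
theorem stabilizer_timelike_SOplus21 (c : ℂ) (hc : c ≠ 0)
    (A : Matrix (Fin 3) (Fin 3) ℝ) (hA : SOplus21 A)
    (h : c • actC A ε₃ = ε₃) :
    c = 1 ∧ A.mulVec ![0, 0, 1] = ![0, 0, 1] ∧
      ∃ φ : ℝ, A = !![Real.cos φ, -Real.sin φ, 0;
                      Real.sin φ,  Real.cos φ, 0;
                      0, 0, 1] := by
  obtain ⟨hη, hdet, hpos⟩ := hA
  have h0 := congrFun h 0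
  have h1 := congrFun h 1
  have h2 := congrFun h 2
  simp [actC, ε₃, Matrix.mulVec, dotProduct, Fin.sum_univ_three,
    Matrix.map_apply, Pi.smul_apply] at h0 h1 h2
  -- equations from Aᵀ η A = η
  have e00 := congrFun (congrFun hη 0) 0
  have e01 := congrFun (congrFun hη 0) 1
  have e02 := congrFun (congrFun hη 0) 2
  have e11 := congrFun (congrFun hη 1) 1
  have e12 := congrFun (congrFun hη 1) 2
  have e22 := congrFun (congrFun hη 2) 2
  simp [η, Matrix.mul_apply, Fin.sum_univ_three, Matrix.diagonal,
    Matrix.transpose_apply] at e00 e01 e02 e11 e12 e22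
  have hA02 : A 0 2 = 0 := by
    rcases h0 with h | h
    · exact absurd h hc
    · exact h
  have hA12 : A 1 2 = 0 := by
    rcases h1 with h | h
    · exact absurd h hc
    · exact h
  have hA22 : A 2 2 = 1 := by nlinarith [e22, hA02, hA12, hpos]
  have hcone : c = 1 := by
    rw [hA22] at h2; simpa using h2
  refine ⟨hcone, ?_, ?_⟩
  · funext i
    fin_cases i <;>
      simp [Matrix.mulVec, dotProduct, Fin.sum_univ_three, hA02, hA12, hA22]
  · -- third row zeros
    rw [hA02, hA12, hA22] at e02 e12
    have hA20 : A 2 0 = 0 := by linarith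
    have hA21 : A 2 1 = 0 := by linarith
    rw [hA20] at e00 e01
    rw [hA21] at e01 e11
    have hcol0 : A 0 0 ^ 2 + A 1 0 ^ 2 = 1 := by linear_combination e00
    have hcol1 : A 0 1 ^ 2 + A 1 1 ^ 2 = 1 := by linear_combination e11
    have horth : A 0 0 * A 0 1 + A 1 0 * A 1 1 = 0 := by linear_combination e01
    have hd2 : A 0 0 * A 1 1 - A 0 1 * A 1 0 = 1 := by
      rw [Matrix.det_fin_three, hA02, hA12, hA20, hA21, hA22] at hdet
      linear_combination hdet
    have hb : A 0 1 = -(A 1 0) := by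
      linear_combination A 0 0 * horth - A 1 0 * hd2 - A 0 1 * hcol0
    have hdd : A 1 1 = A 0 0 := by
      linear_combination A 1 0 * horth + A 0 0 * hd2 - A 1 1 * hcol0
    have hle : -1 ≤ A 0 0 := by nlinarith [sq_nonneg (A 1 0), hcol0, sq_nonneg (A 0 0 + 1)]
    have hge : A 0 0 ≤ 1 := by nlinarith [sq_nonneg (A 1 0), hcol0, sq_nonneg (A 0 0 - 1)]
    set φ : ℝ := if 0 ≤ A 1 0 then Real.arccos (A 0 0) else -Real.arccos (A 0 0) with hφ
    have hcos : Real.cos φ = A 0 0 := by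
      rw [hφ]; split_ifs <;> simp [Real.cos_arccos hle hge]
    have hsin : Real.sin φ = A 1 0 := by
      have hs : Real.sin (Real.arccos (A 0 0)) = Real.sqrt (1 - A 0 0 ^ 2) :=
        Real.sin_arccos _
      have h10 : Real.sqrt (1 - A 0 0 ^ 2) = |A 1 0| := by
        rw [show (1 : ℝ) - A 0 0 ^ 2 = A 1 0 ^ 2 by linear_combination -hcol0]
        exact Real.sqrt_sq_eq_abs _
      rw [hφ]
      split_ifs with hcase
      · rw [hs, h10, abs_of_nonneg hcase]
      · rw [Real.sin_neg, hs, h10, abs_of_neg (lt_of_not_ge hcase)]; ring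
    refine ⟨φ, ?_⟩
    funext i j
    fin_cases i <;> fin_cases j <;>
      simp [hcos, hsin, hb, hdd, hA02, hA12, hA20, hA21, hA22]
end
end

section
/- Let K be a field of characteristic different from 2, V a K-vector space, and β : V × V → K a symmetric bilinear form which is nondegenerate (if β(x,y) = 0 for all y ∈ V then x = 0). Suppose T : V → End_K(V) is a K-linear map satisfying (i) T(u)(v) = T(v)(u) for all u, v ∈ V, and (ii) β(T(u)v, w) + β(v, T(u)w) = 0 for all u, v, w ∈ V. Then T = 0. (The first Cartan prolongation of the orthogonal Lie algebra so(β) of a nondegenerate symmetric bilinear form is trivial; this lemma is the key step in the proof of maximality in Theorem 5.2(v) of the paper.) -/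
/-!
STATEMENT 11 (key lemma in the proof of maximality, Theorem 5.2(v) of the paper):
The first Cartan prolongation of the orthogonal Lie algebra `so(β)` of a
nondegenerate symmetric bilinear form `β` is trivial.
-/

theorem cartan_prolongation_so_trivial (K : Type*) [Field K] (h2 : (2 : K) ≠ 0)
    (V : Type*) [AddCommGroup V] [Module K V]
    (β : V →ₗ[K] V →ₗ[K] K)
    (hsymm : ∀ x y : V, β x y = β y x)
    (hnd : ∀ x : V, (∀ y : V, β x y = 0) → x = 0)
    (T : V →ₗ[K] Module.End K V)
    (hT1 : ∀ u v : V, T u v = T v u)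
    (hT2 : ∀ u v w : V, β (T u v) w + β v (T u w) = 0) :
    T = 0 := by
  have hskew : ∀ u v w : V, β (T u v) w = - β (T u w) v := by
    intro u v w
    have := hT2 u v w
    rw [hsymm v (T u w)] at this
    linear_combination this
  have hzero : ∀ u v w : V, β (T u v) w = 0 := by
    intro u v w
    have h1 : β (T u v) w = - β (T u v) w := by
      calc β (T u v) w = β (T v u) w := by rw [hT1]
        _ = - β (T v w) u := hskew v u w
        _ = - β (T w v) u := by rw [hT1 v w]
        _ = β (T w u) v := by rw [hskew w v u]; ring
        _ = β (T u w) v := by rw [hT1 w u]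
        _ = - β (T u v) w := by rw [hskew u v w]; ring
    have h3 : (2 : K) * β (T u v) w = 0 := by linear_combination h1
    rcases mul_eq_zero.mp h3 with h | h
    · exact absurd h h2
    · exact h
  ext u v
  exact hnd (T u v) (fun w => hzero u v w)
end

section
/- Let W = ℂ² × (ℂ²)* and for a complex 2×2 matrix A let ρ(A) be the endomorphism of W given by ρ(A)(z,ξ) = (A z, −ξ ∘ A). If T : W → End_ℂ(W) is a ℂ-linear map such that T(u)(v) = T(v)(u) for all u, v ∈ W, and such that for every u ∈ W there exists a complex 2×2 matrix A with T(u) = ρ(A), then T = 0. (The first Cartan prolongation of the linear Lie algebra ρ(gl₂(ℂ)) ⊆ gl(W) is trivial; this is the conclusion of the maximality argument in the proof of Theorem 5.2(v) of the paper.) -/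
/-!
STATEMENT 13 (conclusion of the maximality argument, Theorem 5.2(v) of the paper):
The first Cartan prolongation of the linear Lie algebra `ρ(gl₂(ℂ)) ⊆ gl(W)`,
`W = ℂ² × (ℂ²)*`, `ρ(A)(z,ξ) = (Az, −ξ∘A)`, is trivial.
-/

open Matrix

noncomputable section

/-- `W = ℂ² × (ℂ²)*`. -/
abbrev W := (Fin 2 → ℂ) × ((Fin 2 → ℂ) →ₗ[ℂ] ℂ)

/-- The representation `ρ(A)(z,ξ) = (A z, −ξ ∘ A)` of `gl₂(ℂ)` on `W`,
as an endomorphism of `W`. -/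
def ρ (A : Matrix (Fin 2) (Fin 2) ℂ) : Module.End ℂ W :=
  (A.mulVecLin).prodMap (-(LinearMap.lcomp ℂ ℂ A.mulVecLin))

lemma rho_eq_zero_of (A : Matrix (Fin 2) (Fin 2) ℂ) (h : A.mulVecLin = 0) :
    ρ A = 0 := by
  ext u <;> simp [ρ, h]

theorem cartan_prolongation_rho_gl2_trivial (T : W →ₗ[ℂ] Module.End ℂ W)
    (hsym : ∀ u v : W, T u v = T v u)
    (hval : ∀ u : W, ∃ A : Matrix (Fin 2) (Fin 2) ℂ, T u = ρ A) :
    T = 0 := by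
  have h1 : ∀ z : Fin 2 → ℂ, T (z, 0) = 0 := by
    intro z
    obtain ⟨A, hA⟩ := hval (z, 0)
    have hM : A.mulVecLin = 0 := by
      refine LinearMap.ext fun w => funext fun i => ?_
      obtain ⟨B, hB⟩ := hval ((0 : Fin 2 → ℂ), LinearMap.proj i)
      have h := congrArg Prod.snd
        (hsym ((0 : Fin 2 → ℂ), LinearMap.proj i) (z, 0))
      rw [hA, hB] at h
      have h2 := LinearMap.congr_fun h.symm w
      simpa [ρ] using h2
    rw [hA, rho_eq_zero_of A hM]
  have h2 : ∀ ξ : (Fin 2 → ℂ) →ₗ[ℂ] ℂ, T (0, ξ) = 0 := by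
    intro ξ
    obtain ⟨A, hA⟩ := hval (0, ξ)
    have hM : A.mulVecLin = 0 := by
      refine LinearMap.ext fun w => funext fun i => ?_
      have h := congrArg Prod.fst (hsym (w, 0) ((0 : Fin 2 → ℂ), ξ))
      rw [h1 w, hA] at h
      simp only [ρ, LinearMap.prodMap_apply, LinearMap.zero_apply,
        Prod.fst_zero] at h
      exact congrFun h.symm i
    rw [hA, rho_eq_zero_of A hM]
  refine LinearMap.ext fun u => ?_
  have hu : u = ((u.1, 0) : W) + ((0 : Fin 2 → ℂ), u.2) := by simp
  rw [hu, map_add, h1, h2, add_zero]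
  rfl
end
end

section
/- Let I = diag(1,−1,−1,−1) and let 𝔤 = su(1,3) = {A a complex 4×4 matrix : Aᴴ I + I A = 0 and tr A = 0} (a real Lie algebra under the commutator bracket, where Aᴴ is the conjugate transpose). Let E = E₁₂ + E₂₁ ∈ 𝔤 (Eᵢⱼ the elementary matrix) and for p ∈ ℤ let 𝔤^p = {X ∈ 𝔤 : [E,X] = p·X}. Then: (i) 𝔤 = 𝔤^{−2} ⊕ 𝔤^{−1} ⊕ 𝔤^0 ⊕ 𝔤^1 ⊕ 𝔤^2 with real dimensions dim 𝔤^{−2} = dim 𝔤^2 = 1, dim 𝔤^{−1} = dim 𝔤^1 = 4 and dim 𝔤^0 = 5; (ii) [𝔤^{−1}, 𝔤^{−1}] = 𝔤^{−2}; (iii) if X ∈ 𝔤^{−1} and [X,Y] = 0 for all Y ∈ 𝔤^{−1}, then X = 0; and (iv) the matrix 𝔍 = diag(0,0,i,−i) lies in 𝔤^0 and satisfies [𝔍,[𝔍,X]] = −X for all X ∈ 𝔤^{−1}. (The depth-2 grading of su(1,3) of Table 4 together with the complex structure 𝔍 of Table 5, underlying the su(1,3) model of Theorem 5.2 of the paper.)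 -/
/-!
STATEMENT 16 (Tables 4 and 5 of the paper; grading underlying the `su(1,3)` model of
Theorem 5.2): the depth-2 grading of `su(1,3)` induced by the grading element
`E = E₁₂ + E₂₁`, together with the complex structure `𝔍 = diag(0,0,i,−i)`.
-/

open Matrix

noncomputable section

/-- 4×4 complex matrices. -/
abbrev M4C := Matrix (Fin 4) (Fin 4) ℂ

/-- The Hermitian form `I = diag(1,−1,−1,−1)` defining `su(1,3)`. -/
def Imat : M4C := Matrix.diagonal ![1, -1, -1, -1]

/-- The grading element `E = E₁₂ + E₂₁` (1-based indexing of the elementary matrices). -/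
def E : M4C := Matrix.single 0 1 (1 : ℂ) + Matrix.single 1 0 (1 : ℂ)

/-- The degree-`p` component `𝔤^p = {X ∈ su(1,3) : [E,X] = p·X}`, a real subspace of
the complex 4×4 matrices. -/
def gdeg (p : ℤ) : Submodule ℝ M4C where
  carrier := {X | Xᴴ * Imat + Imat * X = 0 ∧ X.trace = 0 ∧ E * X - X * E = (p : ℝ) • X}
  add_mem' := by
    rintro X Y ⟨hX1, hX2, hX3⟩ ⟨hY1, hY2, hY3⟩
    refine ⟨?_, by simp [Matrix.trace_add, hX2, hY2], ?_⟩
    · have h : (X + Y)ᴴ * Imat + Imat * (X + Y)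
          = (Xᴴ * Imat + Imat * X) + (Yᴴ * Imat + Imat * Y) := by
        rw [Matrix.conjTranspose_add]; noncomm_ring
      rw [h, hX1, hY1, add_zero]
    · have h : E * (X + Y) - (X + Y) * E = (E * X - X * E) + (E * Y - Y * E) := by
        noncomm_ring
      rw [h, hX3, hY3, smul_add]
  zero_mem' := by simp
  smul_mem' := by
    rintro c X ⟨hX1, hX2, hX3⟩
    refine ⟨?_, by simp [hX2], ?_⟩
    · rw [Matrix.conjTranspose_smul, star_trivial, Matrix.smul_mul, Matrix.mul_smul,
        ← smul_add, hX1, smul_zero]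
    · have h : E * (c • X) - (c • X) * E = c • (E * X - X * E) := by
        rw [Matrix.mul_smul, Matrix.smul_mul, smul_sub]
      rw [h, hX3, smul_comm]

/-- The complex structure `𝔍 = diag(0,0,i,−i)`. -/
def Jmat : M4C := Matrix.diagonal ![0, 0, Complex.I, -Complex.I]

-- ========== infrastructure ==========
set_option maxHeartbeats 1000000

lemma E_eq : E = !![0,1,0,0; 1,0,0,0; 0,0,0,0; 0,0,0,0] := by
  ext i j
  fin_cases i <;> fin_cases j <;>
    simp [E, Matrix.single, Matrix.add_apply, Matrix.vecHead, Matrix.vecTail,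
      Function.comp]

lemma mem_gdeg_iff {p : ℤ} {X : M4C} :
    X ∈ gdeg p ↔ Xᴴ * Imat + Imat * X = 0 ∧ X.trace = 0 ∧ E * X - X * E = (p : ℝ) • X :=
  Iff.rfl

lemma conj_entry {X : M4C} (h1 : Xᴴ * Imat + Imat * X = 0) :
    ∀ a b, (starRingEnd ℂ) (X a b) = -(Imat a a * Imat b b) * X b a := by
  intro a b
  have h := congrFun (congrFun h1 b) a
  fin_cases a <;> fin_cases b <;>
    simp [Matrix.mul_apply, Matrix.add_apply, Matrix.conjTranspose_apply, Imat,
      Matrix.diagonal_apply, Fin.sum_univ_four] at h ⊢ <;>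
    first
      | linear_combination h
      | linear_combination -h

def adE : M4C →ₗ[ℝ] M4C where
  toFun m := E * m - m * E
  map_add' x y := by noncomm_ring
  map_smul' r x := by
    simp [Matrix.mul_smul, Matrix.smul_mul, smul_sub]

lemma adE_eigen {p : ℤ} {X : M4C} (h : X ∈ gdeg p) : adE X = ((p : ℝ)) • X := h.2.2

-- ========== projections ==========

def P2 (X : M4C) : M4C :=
  !![(X 0 0 - X 0 1 + X 1 0 - X 1 1)/4, -((X 0 0 - X 0 1 + X 1 0 - X 1 1)/4), 0, 0;
     (X 0 0 - X 0 1 + X 1 0 - X 1 1)/4, -((X 0 0 - X 0 1 + X 1 0 - X 1 1)/4), 0, 0;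
     0,0,0,0; 0,0,0,0]

def Pm2 (X : M4C) : M4C :=
  !![(X 0 0 + X 0 1 - X 1 0 - X 1 1)/4, (X 0 0 + X 0 1 - X 1 0 - X 1 1)/4, 0, 0;
     -((X 0 0 + X 0 1 - X 1 0 - X 1 1)/4), -((X 0 0 + X 0 1 - X 1 0 - X 1 1)/4), 0, 0;
     0,0,0,0; 0,0,0,0]

def P1 (X : M4C) : M4C :=
  !![0,0,(X 0 2 + X 1 2)/2, (X 0 3 + X 1 3)/2;
     0,0,(X 0 2 + X 1 2)/2, (X 0 3 + X 1 3)/2;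
     (X 2 0 - X 2 1)/2, -((X 2 0 - X 2 1)/2), 0, 0;
     (X 3 0 - X 3 1)/2, -((X 3 0 - X 3 1)/2), 0, 0]

def Pm1 (X : M4C) : M4C :=
  !![0,0,(X 0 2 - X 1 2)/2, (X 0 3 - X 1 3)/2;
     0,0,-((X 0 2 - X 1 2)/2), -((X 0 3 - X 1 3)/2);
     (X 2 0 + X 2 1)/2, (X 2 0 + X 2 1)/2, 0, 0;
     (X 3 0 + X 3 1)/2, (X 3 0 + X 3 1)/2, 0, 0]

def P0 (X : M4C) : M4C :=
  !![(X 0 0 + X 1 1)/2, (X 0 1 + X 1 0)/2, 0, 0;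
     (X 0 1 + X 1 0)/2, (X 0 0 + X 1 1)/2, 0, 0;
     0, 0, X 2 2, X 2 3;
     0, 0, X 3 2, X 3 3]

lemma comp_sum (X : M4C) : X = Pm2 X + Pm1 X + P0 X + P1 X + P2 X := by
  ext i j
  fin_cases i <;> fin_cases j <;>
    simp [P2, Pm2, P1, Pm1, P0, Matrix.add_apply, Matrix.vecHead, Matrix.vecTail] <;> ring

variable {a b c d e : M4C}
lemma gdeg_unique_zero (ha : a ∈ gdeg (-2)) (hb : b ∈ gdeg (-1)) (hc : c ∈ gdeg 0)
    (hd : d ∈ gdeg 1) (he : e ∈ gdeg 2) (h : a + b + c + d + e = 0) :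
    a = 0 ∧ b = 0 ∧ c = 0 ∧ d = 0 ∧ e = 0 := by
  have fa := adE_eigen ha
  have fb := adE_eigen hb
  have fc := adE_eigen hc
  have fd := adE_eigen hd
  have fe := adE_eigen he
  have T1 : (-2:ℝ) • a + (-1:ℝ) • b + (0:ℝ) • c + (1:ℝ) • d + (2:ℝ) • e = 0 := by
    have := congrArg adE h
    simp only [map_add, map_zero, fa, fb, fc, fd, fe] at this
    linear_combination (norm := module) this
  have T2 : (4:ℝ) • a + (1:ℝ) • b + (0:ℝ) • c + (1:ℝ) • d + (4:ℝ) • e = 0 := by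
    have := congrArg adE T1
    simp only [map_add, map_zero, _root_.map_smul, fa, fb, fc, fd, fe] at this
    linear_combination (norm := module) this
  have T3 : (-8:ℝ) • a + (-1:ℝ) • b + (0:ℝ) • c + (1:ℝ) • d + (8:ℝ) • e = 0 := by
    have := congrArg adE T2
    simp only [map_add, map_zero, _root_.map_smul, fa, fb, fc, fd, fe] at this
    linear_combination (norm := module) this
  have T4 : (16:ℝ) • a + (1:ℝ) • b + (0:ℝ) • c + (1:ℝ) • d + (16:ℝ) • e = 0 := by
    have := congrArg adE T3
    simp only [map_add, map_zero, _root_.map_smul, fa, fb, fc, fd, fe] at this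
    linear_combination (norm := module) this
  refine ⟨?_, ?_, ?_, ?_, ?_⟩
  · linear_combination (norm := module) (1/12 : ℝ) • T1 - (1/24 : ℝ) • T2
      - (1/12 : ℝ) • T3 + (1/24 : ℝ) • T4
  · linear_combination (norm := module) (-2/3 : ℝ) • T1 + (2/3 : ℝ) • T2
      + (1/6 : ℝ) • T3 - (1/6 : ℝ) • T4
  · linear_combination (norm := module) h - (5/4 : ℝ) • T2 + (1/4 : ℝ) • T4
  · linear_combination (norm := module) (2/3 : ℝ) • T1 + (2/3 : ℝ) • T2
      - (1/6 : ℝ) • T3 - (1/6 : ℝ) • T4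
  · linear_combination (norm := module) (-1/12 : ℝ) • T1 - (1/24 : ℝ) • T2
      + (1/12 : ℝ) • T3 + (1/24 : ℝ) • T4
-- ===== basis matrices =====
def Mneg (z w : ℂ) : M4C :=
  !![0,0,z,w; 0,0,-z,-w;
     starRingEnd ℂ z, starRingEnd ℂ z, 0,0;
     starRingEnd ℂ w, starRingEnd ℂ w, 0,0]

def Mpos (z w : ℂ) : M4C :=
  !![0,0,z,w; 0,0,z,w;
     starRingEnd ℂ z, -(starRingEnd ℂ z), 0,0;
     starRingEnd ℂ w, -(starRingEnd ℂ w), 0,0]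

def B2_s16 : M4C := !![Complex.I, -Complex.I, 0,0; Complex.I, -Complex.I, 0,0;
  0,0,0,0; 0,0,0,0]

def Bm2 : M4C := !![Complex.I, Complex.I, 0,0; -Complex.I, -Complex.I, 0,0;
  0,0,0,0; 0,0,0,0]

def M0 (a b u : ℝ) (c : ℂ) : M4C :=
  !![(a:ℂ) * Complex.I, (b:ℂ), 0, 0;
     (b:ℂ), (a:ℂ) * Complex.I, 0, 0;
     0, 0, (u:ℂ) * Complex.I, c;
     0, 0, -(starRingEnd ℂ c), ((-2*a-u : ℝ):ℂ) * Complex.I]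

lemma Mneg_mem (z w : ℂ) : Mneg z w ∈ gdeg (-1) := by
  refine ⟨?_, ?_, ?_⟩
  · ext i j
    fin_cases i <;> fin_cases j <;>
      simp [Mneg, Imat, Matrix.mul_apply, Matrix.add_apply, Matrix.conjTranspose_apply,
        Matrix.diagonal_apply, Fin.sum_univ_four, Matrix.vecHead, Matrix.vecTail] <;> ring
  · simp [Mneg, Matrix.trace, Fin.sum_univ_four, Matrix.diag, Matrix.vecHead, Matrix.vecTail]
  · ext i j
    fin_cases i <;> fin_cases j <;>
      simp [Mneg, E_eq, Matrix.mul_apply, Fin.sum_univ_four, Matrix.vecHead,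
        Matrix.vecTail] <;> ring

lemma Mpos_mem (z w : ℂ) : Mpos z w ∈ gdeg 1 := by
  refine ⟨?_, ?_, ?_⟩
  · ext i j
    fin_cases i <;> fin_cases j <;>
      simp [Mpos, Imat, Matrix.mul_apply, Matrix.add_apply, Matrix.conjTranspose_apply,
        Matrix.diagonal_apply, Fin.sum_univ_four, Matrix.vecHead, Matrix.vecTail] <;> ring
  · simp [Mpos, Matrix.trace, Fin.sum_univ_four, Matrix.diag, Matrix.vecHead, Matrix.vecTail]
  · ext i j
    fin_cases i <;> fin_cases j <;>
      simp [Mpos, E_eq, Matrix.mul_apply, Fin.sum_univ_four, Matrix.vecHead,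
        Matrix.vecTail] <;> ring

lemma B2_mem : B2_s16 ∈ gdeg 2 := by
  refine ⟨?_, ?_, ?_⟩
  · ext i j
    fin_cases i <;> fin_cases j <;>
      simp [B2_s16, Imat, Matrix.mul_apply, Matrix.add_apply, Matrix.conjTranspose_apply,
        Matrix.diagonal_apply, Fin.sum_univ_four, Matrix.vecHead, Matrix.vecTail,
        Complex.conj_I] <;> ring
  · simp [B2_s16, Matrix.trace, Fin.sum_univ_four, Matrix.diag, Matrix.vecHead, Matrix.vecTail]
  · ext i j
    fin_cases i <;> fin_cases j <;>
      simp [B2_s16, E_eq, Matrix.mul_apply, Fin.sum_univ_four, Matrix.vecHead,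
        Matrix.vecTail] <;> ring

lemma Bm2_mem : Bm2 ∈ gdeg (-2) := by
  refine ⟨?_, ?_, ?_⟩
  · ext i j
    fin_cases i <;> fin_cases j <;>
      simp [Bm2, Imat, Matrix.mul_apply, Matrix.add_apply, Matrix.conjTranspose_apply,
        Matrix.diagonal_apply, Fin.sum_univ_four, Matrix.vecHead, Matrix.vecTail,
        Complex.conj_I] <;> ring
  · simp [Bm2, Matrix.trace, Fin.sum_univ_four, Matrix.diag, Matrix.vecHead, Matrix.vecTail]
  · ext i j
    fin_cases i <;> fin_cases j <;>
      simp [Bm2, E_eq, Matrix.mul_apply, Fin.sum_univ_four, Matrix.vecHead,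
        Matrix.vecTail] <;> ring

lemma M0_mem (a b u : ℝ) (c : ℂ) : M0 a b u c ∈ gdeg 0 := by
  refine ⟨?_, ?_, ?_⟩
  · ext i j
    fin_cases i <;> fin_cases j <;>
      simp [M0, Imat, Matrix.mul_apply, Matrix.add_apply, Matrix.conjTranspose_apply,
        Matrix.diagonal_apply, Fin.sum_univ_four, Matrix.vecHead, Matrix.vecTail,
        Complex.conj_I, _root_.map_mul, map_sub, map_neg, map_ofNat, Complex.conj_ofReal] <;> ring
  · simp [M0, Matrix.trace, Fin.sum_univ_four, Matrix.diag, Matrix.vecHead, Matrix.vecTail]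
    ring
  · ext i j
    fin_cases i <;> fin_cases j <;>
      simp [M0, E_eq, Matrix.mul_apply, Fin.sum_univ_four, Matrix.vecHead,
        Matrix.vecTail] <;> ring
-- proj memberships
lemma Pm2_mem {X : M4C} (h1 : Xᴴ * Imat + Imat * X = 0) : Pm2 X ∈ gdeg (-2) := by
  have hc := conj_entry h1
  refine ⟨?_, ?_, ?_⟩
  · ext i j
    fin_cases i <;> fin_cases j <;>
      simp [Pm2, Imat, Matrix.mul_apply, Matrix.add_apply, Matrix.conjTranspose_apply,
        Matrix.diagonal_apply, Fin.sum_univ_four, Matrix.vecHead, Matrix.vecTail,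
        map_add, map_sub, map_div₀, map_ofNat, hc] <;> ring
  · simp [Pm2, Matrix.trace, Fin.sum_univ_four, Matrix.diag, Matrix.vecHead, Matrix.vecTail]
  · ext i j
    fin_cases i <;> fin_cases j <;>
      simp [Pm2, E_eq, Matrix.mul_apply, Fin.sum_univ_four, Matrix.vecHead,
        Matrix.vecTail] <;> ring

lemma P2_mem {X : M4C} (h1 : Xᴴ * Imat + Imat * X = 0) : P2 X ∈ gdeg 2 := by
  have hc := conj_entry h1
  refine ⟨?_, ?_, ?_⟩
  · ext i j
    fin_cases i <;> fin_cases j <;>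
      simp [P2, Imat, Matrix.mul_apply, Matrix.add_apply, Matrix.conjTranspose_apply,
        Matrix.diagonal_apply, Fin.sum_univ_four, Matrix.vecHead, Matrix.vecTail,
        map_add, map_sub, map_div₀, map_ofNat, hc] <;> ring
  · simp [P2, Matrix.trace, Fin.sum_univ_four, Matrix.diag, Matrix.vecHead, Matrix.vecTail]
  · ext i j
    fin_cases i <;> fin_cases j <;>
      simp [P2, E_eq, Matrix.mul_apply, Fin.sum_univ_four, Matrix.vecHead,
        Matrix.vecTail] <;> ring

lemma Pm1_mem {X : M4C} (h1 : Xᴴ * Imat + Imat * X = 0) : Pm1 X ∈ gdeg (-1) := by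
  have hc := conj_entry h1
  refine ⟨?_, ?_, ?_⟩
  · ext i j
    fin_cases i <;> fin_cases j <;>
      simp [Pm1, Imat, Matrix.mul_apply, Matrix.add_apply, Matrix.conjTranspose_apply,
        Matrix.diagonal_apply, Fin.sum_univ_four, Matrix.vecHead, Matrix.vecTail,
        map_add, map_sub, map_div₀, map_ofNat, hc] <;> ring
  · simp [Pm1, Matrix.trace, Fin.sum_univ_four, Matrix.diag, Matrix.vecHead, Matrix.vecTail]
  · ext i j
    fin_cases i <;> fin_cases j <;>
      simp [Pm1, E_eq, Matrix.mul_apply, Fin.sum_univ_four, Matrix.vecHead,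
        Matrix.vecTail] <;> ring

lemma P1_mem {X : M4C} (h1 : Xᴴ * Imat + Imat * X = 0) : P1 X ∈ gdeg 1 := by
  have hc := conj_entry h1
  refine ⟨?_, ?_, ?_⟩
  · ext i j
    fin_cases i <;> fin_cases j <;>
      simp [P1, Imat, Matrix.mul_apply, Matrix.add_apply, Matrix.conjTranspose_apply,
        Matrix.diagonal_apply, Fin.sum_univ_four, Matrix.vecHead, Matrix.vecTail,
        map_add, map_sub, map_div₀, map_ofNat, hc] <;> ring
  · simp [P1, Matrix.trace, Fin.sum_univ_four, Matrix.diag, Matrix.vecHead, Matrix.vecTail]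
  · ext i j
    fin_cases i <;> fin_cases j <;>
      simp [P1, E_eq, Matrix.mul_apply, Fin.sum_univ_four, Matrix.vecHead,
        Matrix.vecTail] <;> ring

lemma P0_mem {X : M4C} (h1 : Xᴴ * Imat + Imat * X = 0) (h2 : X.trace = 0) :
    P0 X ∈ gdeg 0 := by
  have hc := conj_entry h1
  have htr : X 0 0 + X 1 1 + X 2 2 + X 3 3 = 0 := by
    simpa [Matrix.trace, Fin.sum_univ_four, Matrix.diag] using h2
  refine ⟨?_, ?_, ?_⟩
  · ext i j
    fin_cases i <;> fin_cases j <;>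
      simp [P0, Imat, Matrix.mul_apply, Matrix.add_apply, Matrix.conjTranspose_apply,
        Matrix.diagonal_apply, Fin.sum_univ_four, Matrix.vecHead, Matrix.vecTail,
        map_add, map_sub, map_div₀, map_ofNat, hc] <;> ring
  · simp [P0, Matrix.trace, Fin.sum_univ_four, Matrix.diag, Matrix.vecHead, Matrix.vecTail]
    linear_combination htr
  · ext i j
    fin_cases i <;> fin_cases j <;>
      simp [P0, E_eq, Matrix.mul_apply, Fin.sum_univ_four, Matrix.vecHead,
        Matrix.vecTail] <;> ring

-- eq_proj lemmas
lemma eq_Pm2 {X : M4C} (hX : X ∈ gdeg (-2)) : X = Pm2 X := by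
  have h0 : (Pm2 X - X) + Pm1 X + P0 X + P1 X + P2 X = 0 := by
    linear_combination (norm := module) (-1 : ℝ) • comp_sum X
  obtain ⟨hz, -, -, -, -⟩ := gdeg_unique_zero (sub_mem (Pm2_mem hX.1) hX)
    (Pm1_mem hX.1) (P0_mem hX.1 hX.2.1) (P1_mem hX.1) (P2_mem hX.1) h0
  exact (sub_eq_zero.mp hz).symm

lemma eq_Pm1 {X : M4C} (hX : X ∈ gdeg (-1)) : X = Pm1 X := by
  have h0 : Pm2 X + (Pm1 X - X) + P0 X + P1 X + P2 X = 0 := by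
    linear_combination (norm := module) (-1 : ℝ) • comp_sum X
  obtain ⟨-, hz, -, -, -⟩ := gdeg_unique_zero (Pm2_mem hX.1)
    (sub_mem (Pm1_mem hX.1) hX) (P0_mem hX.1 hX.2.1) (P1_mem hX.1) (P2_mem hX.1) h0
  exact (sub_eq_zero.mp hz).symm

lemma eq_P0 {X : M4C} (hX : X ∈ gdeg 0) : X = P0 X := by
  have h0 : Pm2 X + Pm1 X + (P0 X - X) + P1 X + P2 X = 0 := by
    linear_combination (norm := module) (-1 : ℝ) • comp_sum X
  obtain ⟨-, -, hz, -, -⟩ := gdeg_unique_zero (Pm2_mem hX.1) (Pm1_mem hX.1)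
    (sub_mem (P0_mem hX.1 hX.2.1) hX) (P1_mem hX.1) (P2_mem hX.1) h0
  exact (sub_eq_zero.mp hz).symm

lemma eq_P1 {X : M4C} (hX : X ∈ gdeg 1) : X = P1 X := by
  have h0 : Pm2 X + Pm1 X + P0 X + (P1 X - X) + P2 X = 0 := by
    linear_combination (norm := module) (-1 : ℝ) • comp_sum X
  obtain ⟨-, -, -, hz, -⟩ := gdeg_unique_zero (Pm2_mem hX.1) (Pm1_mem hX.1)
    (P0_mem hX.1 hX.2.1) (sub_mem (P1_mem hX.1) hX) (P2_mem hX.1) h0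
  exact (sub_eq_zero.mp hz).symm

lemma eq_P2 {X : M4C} (hX : X ∈ gdeg 2) : X = P2 X := by
  have h0 : Pm2 X + Pm1 X + P0 X + P1 X + (P2 X - X) = 0 := by
    linear_combination (norm := module) (-1 : ℝ) • comp_sum X
  obtain ⟨-, -, -, -, hz⟩ := gdeg_unique_zero (Pm2_mem hX.1) (Pm1_mem hX.1)
    (P0_mem hX.1 hX.2.1) (P1_mem hX.1) (sub_mem (P2_mem hX.1) hX) h0
  exact (sub_eq_zero.mp hz).symm


lemma imI {z : ℂ} (h : (starRingEnd ℂ) z = -z) : ((z.im : ℝ) : ℂ) * Complex.I = z := by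
  have h1 := congrArg Complex.re h
  simp [Complex.conj_re] at h1
  have hre : z.re = 0 := by linarith
  apply Complex.ext <;> simp [hre]

lemma reR {z : ℂ} (h : (starRingEnd ℂ) z = z) : ((z.re : ℝ) : ℂ) = z := by
  have h1 := congrArg Complex.im h
  simp [Complex.conj_im] at h1
  have him : z.im = 0 := by linarith
  apply Complex.ext <;> simp [him]

section params
variable {X : M4C}

lemma param_m1 (hX : X ∈ gdeg (-1)) : X = Mneg (X 0 2) (X 0 3) := by
  have hP := eq_Pm1 hX
  have hcj := conj_entry hX.1
  have q : ∀ i j, X i j = Pm1 X i j := fun i j => congrFun (congrFun hP i) j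
  have e00 := q 0 0; have e01 := q 0 1; have e02 := q 0 2; have e03 := q 0 3
  have e10 := q 1 0; have e11 := q 1 1; have e12 := q 1 2; have e13 := q 1 3
  have e20 := q 2 0; have e21 := q 2 1; have e22 := q 2 2; have e23 := q 2 3
  have e30 := q 3 0; have e31 := q 3 1; have e32 := q 3 2; have e33 := q 3 3
  have hc02 := hcj 0 2; have hc03 := hcj 0 3
  simp [Pm1, Imat, Matrix.diagonal_apply, Matrix.vecHead, Matrix.vecTail] at e00 e01 e02 e03 e10 e11 e12 e13 e20 e21 e22 e23 e30 e31 e32 e33 hc02 hc03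
  ext i j
  fin_cases i <;> fin_cases j <;> simp [Mneg, Matrix.vecHead, Matrix.vecTail] <;>
  first
    | rfl
    | linear_combination e00
    | linear_combination e01
    | linear_combination e10
    | linear_combination e11
    | linear_combination e22
    | linear_combination e23
    | linear_combination e32
    | linear_combination e33
    | linear_combination e02 + e12
    | linear_combination e03 + e13
    | linear_combination -hc02
    | linear_combination 2*e21 - hc02
    | linear_combination -hc03
    | linear_combination 2*e31 - hc03

lemma param_p1 (hX : X ∈ gdeg 1) : X = Mpos (X 0 2) (X 0 3) := by
  have hP := eq_P1 hX
  have hcj := conj_entry hX.1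
  have q : ∀ i j, X i j = P1 X i j := fun i j => congrFun (congrFun hP i) j
  have e00 := q 0 0; have e01 := q 0 1; have e02 := q 0 2; have e03 := q 0 3
  have e10 := q 1 0; have e11 := q 1 1; have e12 := q 1 2; have e13 := q 1 3
  have e20 := q 2 0; have e21 := q 2 1; have e22 := q 2 2; have e23 := q 2 3
  have e30 := q 3 0; have e31 := q 3 1; have e32 := q 3 2; have e33 := q 3 3
  have hc02 := hcj 0 2; have hc03 := hcj 0 3
  simp [P1, Imat, Matrix.diagonal_apply, Matrix.vecHead, Matrix.vecTail] at e00 e01 e02 e03 e10 e11 e12 e13 e20 e21 e22 e23 e30 e31 e32 e33 hc02 hc03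
  ext i j
  fin_cases i <;> fin_cases j <;> simp [Mpos, Matrix.vecHead, Matrix.vecTail] <;>
  first
    | rfl
    | linear_combination e00
    | linear_combination e01
    | linear_combination e10
    | linear_combination e11
    | linear_combination e22
    | linear_combination e23
    | linear_combination e32
    | linear_combination e33
    | linear_combination e12 - e02
    | linear_combination e13 - e03
    | linear_combination -hc02
    | linear_combination 2*e20 + hc02
    | linear_combination -hc03
    | linear_combination 2*e30 + hc03

lemma param_2 (hX : X ∈ gdeg 2) : X = ((X 0 0).im : ℝ) • B2_s16 := by
  have hP := eq_P2 hX
  have hcj := conj_entry hX.1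
  have q : ∀ i j, X i j = P2 X i j := fun i j => congrFun (congrFun hP i) j
  have e00 := q 0 0; have e01 := q 0 1; have e02 := q 0 2; have e03 := q 0 3
  have e10 := q 1 0; have e11 := q 1 1; have e12 := q 1 2; have e13 := q 1 3
  have e20 := q 2 0; have e21 := q 2 1; have e22 := q 2 2; have e23 := q 2 3
  have e30 := q 3 0; have e31 := q 3 1; have e32 := q 3 2; have e33 := q 3 3
  have hc00 := hcj 0 0
  simp [P2, Imat, Matrix.diagonal_apply, Matrix.vecHead, Matrix.vecTail] at e00 e01 e02 e03 e10 e11 e12 e13 e20 e21 e22 e23 e30 e31 e32 e33 hc00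
  have imI00 := imI (by linear_combination hc00)
  ext i j
  fin_cases i <;> fin_cases j <;>
    simp [B2_s16, Matrix.smul_apply, Matrix.vecHead, Matrix.vecTail, Complex.real_smul] <;>
  first
    | rfl
    | linear_combination e02
    | linear_combination e03
    | linear_combination e12
    | linear_combination e13
    | linear_combination e20
    | linear_combination e21
    | linear_combination e22
    | linear_combination e23
    | linear_combination e30
    | linear_combination e31
    | linear_combination e32
    | linear_combination e33
    | linear_combination -imI00
    | linear_combination e00 + e01 + imI00
    | linear_combination e10 - e00 - imI00
    | linear_combination e11 + e00 + imI00

lemma param_m2 (hX : X ∈ gdeg (-2)) : X = ((X 0 0).im : ℝ) • Bm2 := by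
  have hP := eq_Pm2 hX
  have hcj := conj_entry hX.1
  have q : ∀ i j, X i j = Pm2 X i j := fun i j => congrFun (congrFun hP i) j
  have e00 := q 0 0; have e01 := q 0 1; have e02 := q 0 2; have e03 := q 0 3
  have e10 := q 1 0; have e11 := q 1 1; have e12 := q 1 2; have e13 := q 1 3
  have e20 := q 2 0; have e21 := q 2 1; have e22 := q 2 2; have e23 := q 2 3
  have e30 := q 3 0; have e31 := q 3 1; have e32 := q 3 2; have e33 := q 3 3
  have hc00 := hcj 0 0
  simp [Pm2, Imat, Matrix.diagonal_apply, Matrix.vecHead, Matrix.vecTail] at e00 e01 e02 e03 e10 e11 e12 e13 e20 e21 e22 e23 e30 e31 e32 e33 hc00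
  have imI00 := imI (by linear_combination hc00)
  ext i j
  fin_cases i <;> fin_cases j <;>
    simp [Bm2, Matrix.smul_apply, Matrix.vecHead, Matrix.vecTail, Complex.real_smul] <;>
  first
    | rfl
    | linear_combination e02
    | linear_combination e03
    | linear_combination e12
    | linear_combination e13
    | linear_combination e20
    | linear_combination e21
    | linear_combination e22
    | linear_combination e23
    | linear_combination e30
    | linear_combination e31
    | linear_combination e32
    | linear_combination e33
    | linear_combination -imI00
    | linear_combination e01 - e00 - imI00
    | linear_combination e10 + e00 + imI00
    | linear_combination e11 + e00 + imI00

lemma param_0 (hX : X ∈ gdeg 0) :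
    X = M0 (X 0 0).im (X 0 1).re (X 2 2).im (X 2 3) := by
  have hP := eq_P0 hX
  have hcj := conj_entry hX.1
  have htr : X 0 0 + X 1 1 + X 2 2 + X 3 3 = 0 := by
    have := hX.2.1
    simpa [Matrix.trace, Fin.sum_univ_four, Matrix.diag] using this
  have q : ∀ i j, X i j = P0 X i j := fun i j => congrFun (congrFun hP i) j
  have e00 := q 0 0; have e01 := q 0 1; have e02 := q 0 2; have e03 := q 0 3
  have e10 := q 1 0; have e11 := q 1 1; have e12 := q 1 2; have e13 := q 1 3
  have e20 := q 2 0; have e21 := q 2 1; have e22 := q 2 2; have e23 := q 2 3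
  have e30 := q 3 0; have e31 := q 3 1; have e32 := q 3 2; have e33 := q 3 3
  have hc00 := hcj 0 0; have hc01 := hcj 0 1; have hc22 := hcj 2 2; have hc23 := hcj 2 3
  simp [P0, Imat, Matrix.diagonal_apply, Matrix.vecHead, Matrix.vecTail] at e00 e01 e02 e03 e10 e11 e12 e13 e20 e21 e22 e23 e30 e31 e32 e33 hc00 hc01 hc22 hc23
  have imI00 := imI (z := X 0 0) (by linear_combination hc00)
  have imI22 := imI (z := X 2 2) (by linear_combination hc22)
  have reR01 := reR (z := X 0 1) (by linear_combination hc01 - e01 + e10)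
  ext i j
  fin_cases i <;> fin_cases j <;>
    simp [M0, Matrix.vecHead, Matrix.vecTail] <;>
  first
    | rfl
    | linear_combination e02
    | linear_combination e03
    | linear_combination e12
    | linear_combination e13
    | linear_combination e20
    | linear_combination e21
    | linear_combination e30
    | linear_combination e31
    | linear_combination -imI00
    | linear_combination -imI22
    | linear_combination -reR01
    | linear_combination e10 - e01 - reR01
    | linear_combination e11 - e00 - imI00
    | linear_combination hc23
    | linear_combination htr - e11 + e00 + 2*imI00 + imI22
    | (push_cast; linear_combination htr - e11 + e00 + 2*imI00 + imI22)

end params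


-- linear maps
def phiM1 : (ℂ × ℂ) →ₗ[ℝ] M4C where
  toFun zw := Mneg zw.1 zw.2
  map_add' x y := by
    ext i j
    fin_cases i <;> fin_cases j <;>
      simp [Mneg, Matrix.add_apply, Matrix.vecHead, Matrix.vecTail, map_add] <;> ring
  map_smul' r x := by
    ext i j
    fin_cases i <;> fin_cases j <;>
      simp [Mneg, Matrix.smul_apply, Matrix.vecHead, Matrix.vecTail, Complex.real_smul,
        _root_.map_mul, Complex.conj_ofReal] <;> ring

def phiP1 : (ℂ × ℂ) →ₗ[ℝ] M4C where
  toFun zw := Mpos zw.1 zw.2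
  map_add' x y := by
    ext i j
    fin_cases i <;> fin_cases j <;>
      simp [Mpos, Matrix.add_apply, Matrix.vecHead, Matrix.vecTail, map_add] <;> ring
  map_smul' r x := by
    ext i j
    fin_cases i <;> fin_cases j <;>
      simp [Mpos, Matrix.smul_apply, Matrix.vecHead, Matrix.vecTail, Complex.real_smul,
        _root_.map_mul, Complex.conj_ofReal] <;> ring

def phi0 : (ℝ × ℝ × ℝ × ℂ) →ₗ[ℝ] M4C where
  toFun v := M0 v.1 v.2.1 v.2.2.1 v.2.2.2
  map_add' x y := by
    ext i j
    fin_cases i <;> fin_cases j <;>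
      simp [M0, Matrix.add_apply, Matrix.vecHead, Matrix.vecTail, map_add] <;>
      push_cast <;> ring
  map_smul' r x := by
    ext i j
    fin_cases i <;> fin_cases j <;>
      simp [M0, Matrix.smul_apply, Matrix.vecHead, Matrix.vecTail, Complex.real_smul,
        _root_.map_mul, Complex.conj_ofReal, smul_eq_mul] <;>
      push_cast <;> ring

lemma range_phiM1 : LinearMap.range phiM1 = gdeg (-1) := by
  apply le_antisymm
  · rintro _ ⟨⟨z, w⟩, rfl⟩
    exact Mneg_mem z w
  · intro X hX
    exact ⟨(X 0 2, X 0 3), (param_m1 hX).symm⟩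

lemma range_phiP1 : LinearMap.range phiP1 = gdeg 1 := by
  apply le_antisymm
  · rintro _ ⟨⟨z, w⟩, rfl⟩
    exact Mpos_mem z w
  · intro X hX
    exact ⟨(X 0 2, X 0 3), (param_p1 hX).symm⟩

lemma range_phi0 : LinearMap.range phi0 = gdeg 0 := by
  apply le_antisymm
  · rintro _ ⟨⟨a, b, u, c⟩, rfl⟩
    exact M0_mem a b u c
  · intro X hX
    exact ⟨((X 0 0).im, (X 0 1).re, (X 2 2).im, X 2 3), (param_0 hX).symm⟩

lemma inj_phiM1 : Function.Injective phiM1 := by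
  intro x y hxy
  have h2 := congrFun (congrFun hxy 0) 2
  have h3 := congrFun (congrFun hxy 0) 3
  simp [phiM1, Mneg, Matrix.vecHead, Matrix.vecTail] at h2 h3
  exact Prod.ext h2 h3

lemma inj_phiP1 : Function.Injective phiP1 := by
  intro x y hxy
  have h2 := congrFun (congrFun hxy 0) 2
  have h3 := congrFun (congrFun hxy 0) 3
  simp [phiP1, Mpos, Matrix.vecHead, Matrix.vecTail] at h2 h3
  exact Prod.ext h2 h3

lemma inj_phi0 : Function.Injective phi0 := by
  intro x y hxy
  have h00 := congrFun (congrFun hxy 0) 0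
  have h01 := congrFun (congrFun hxy 0) 1
  have h22 := congrFun (congrFun hxy 2) 2
  have h23 := congrFun (congrFun hxy 2) 3
  simp [phi0, M0, Matrix.vecHead, Matrix.vecTail, Complex.ext_iff] at h00 h01 h22 h23
  obtain ⟨a, b, u, c⟩ := x; obtain ⟨a', b', u', c'⟩ := y
  simp_all
  exact Complex.ext h23.1 h23.2

lemma finrank_gdeg_m1 : Module.finrank ℝ (gdeg (-1)) = 4 := by
  rw [← range_phiM1, LinearMap.finrank_range_of_inj inj_phiM1]
  simp [Module.finrank_prod, Complex.finrank_real_complex]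

lemma finrank_gdeg_p1 : Module.finrank ℝ (gdeg 1) = 4 := by
  rw [← range_phiP1, LinearMap.finrank_range_of_inj inj_phiP1]
  simp [Module.finrank_prod, Complex.finrank_real_complex]

lemma finrank_gdeg_0 : Module.finrank ℝ (gdeg 0) = 5 := by
  rw [← range_phi0, LinearMap.finrank_range_of_inj inj_phi0]
  simp [Module.finrank_prod, Complex.finrank_real_complex, Module.finrank_self]

lemma B2_ne : B2_s16 ≠ 0 := by
  intro h
  have := congrFun (congrFun h 0) 0
  simp [B2_s16, Complex.I_ne_zero] at this

lemma Bm2_ne : Bm2 ≠ 0 := by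
  intro h
  have := congrFun (congrFun h 0) 0
  simp [Bm2, Complex.I_ne_zero] at this

lemma gdeg2_span : gdeg 2 = Submodule.span ℝ {B2_s16} := by
  apply le_antisymm
  · intro X hX
    exact Submodule.mem_span_singleton.mpr ⟨(X 0 0).im, (param_2 hX).symm⟩
  · rw [Submodule.span_le, Set.singleton_subset_iff]
    exact B2_mem

lemma gdegm2_span : gdeg (-2) = Submodule.span ℝ {Bm2} := by
  apply le_antisymm
  · intro X hX
    exact Submodule.mem_span_singleton.mpr ⟨(X 0 0).im, (param_m2 hX).symm⟩
  · rw [Submodule.span_le, Set.singleton_subset_iff]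
    exact Bm2_mem

lemma finrank_gdeg_2 : Module.finrank ℝ (gdeg 2) = 1 := by
  rw [gdeg2_span]; exact finrank_span_singleton B2_ne

lemma finrank_gdeg_m2 : Module.finrank ℝ (gdeg (-2)) = 1 := by
  rw [gdegm2_span]; exact finrank_span_singleton Bm2_ne


lemma comm_Mneg (z w z' w' : ℂ) :
    Mneg z w * Mneg z' w' - Mneg z' w' * Mneg z w
      = ((2 * (z * starRingEnd ℂ z' + w * starRingEnd ℂ w').im : ℝ)) • Bm2 := by
  ext i j
  fin_cases i <;> fin_cases j <;>
    simp [Mneg, Bm2, Matrix.mul_apply, Fin.sum_univ_four, Matrix.smul_apply,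
      Complex.real_smul, Matrix.vecHead, Matrix.vecTail] <;>
  (try ring) <;> (apply Complex.ext) <;> simp <;> ring

lemma Jmat_eq : Jmat = !![0,0,0,0; 0,0,0,0; 0,0,Complex.I,0; 0,0,0,-Complex.I] := by
  ext i j
  fin_cases i <;> fin_cases j <;>
    simp [Jmat, Matrix.diagonal_apply, Matrix.vecHead, Matrix.vecTail]

lemma Jmat_mem : Jmat ∈ gdeg 0 := by
  refine ⟨?_, ?_, ?_⟩
  · ext i j
    fin_cases i <;> fin_cases j <;>
      simp [Jmat_eq, Imat, Matrix.mul_apply, Matrix.add_apply, Matrix.conjTranspose_apply,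
        Matrix.diagonal_apply, Fin.sum_univ_four, Matrix.vecHead, Matrix.vecTail,
        Complex.conj_I]
  · simp [Jmat_eq, Matrix.trace, Fin.sum_univ_four, Matrix.diag,
      Matrix.vecHead, Matrix.vecTail]
  · ext i j
    fin_cases i <;> fin_cases j <;>
      simp [Jmat_eq, E_eq, Matrix.mul_apply, Fin.sum_univ_four,
        Matrix.vecHead, Matrix.vecTail]

lemma Jmat_sq (z w : ℂ) :
    Jmat * (Jmat * Mneg z w - Mneg z w * Jmat) - (Jmat * Mneg z w - Mneg z w * Jmat) * Jmat
      = -(Mneg z w) := by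
  ext i j
  fin_cases i <;> fin_cases j <;>
    simp [Jmat_eq, Mneg, Matrix.mul_apply, Fin.sum_univ_four,
      Matrix.neg_apply, Matrix.vecHead, Matrix.vecTail] <;>
  (try ring) <;> (apply Complex.ext) <;> simp <;> ring

lemma Mneg_zero : Mneg 0 0 = 0 := by
  ext i j
  fin_cases i <;> fin_cases j <;>
    simp [Mneg, Matrix.vecHead, Matrix.vecTail]


theorem su13_grading :
    -- (i) direct sum decomposition of su(1,3), with the real dimensions of the summands
    ((∀ X : M4C, Xᴴ * Imat + Imat * X = 0 → X.trace = 0 →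
        ∃! y : gdeg (-2) × gdeg (-1) × gdeg 0 × gdeg 1 × gdeg 2,
          X = (y.1 : M4C) + (y.2.1 : M4C) + (y.2.2.1 : M4C) + (y.2.2.2.1 : M4C) +
            (y.2.2.2.2 : M4C)) ∧
      Module.finrank ℝ (gdeg (-2)) = 1 ∧ Module.finrank ℝ (gdeg 2) = 1 ∧
      Module.finrank ℝ (gdeg (-1)) = 4 ∧ Module.finrank ℝ (gdeg 1) = 4 ∧
      Module.finrank ℝ (gdeg 0) = 5) ∧
    -- (ii) [𝔤^{−1}, 𝔤^{−1}] = 𝔤^{−2}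
    (Submodule.span ℝ {Z : M4C | ∃ X ∈ gdeg (-1), ∃ Y ∈ gdeg (-1), Z = X * Y - Y * X}
      = gdeg (-2)) ∧
    -- (iii) nondegeneracy
    (∀ X ∈ gdeg (-1), (∀ Y ∈ gdeg (-1), X * Y - Y * X = 0) → X = 0) ∧
    -- (iv) the complex structure 𝔍 on 𝔤^{−1}
    (Jmat ∈ gdeg 0 ∧ ∀ X ∈ gdeg (-1),
      Jmat * (Jmat * X - X * Jmat) - (Jmat * X - X * Jmat) * Jmat = -X) := by

  refine ⟨⟨?_, finrank_gdeg_m2, finrank_gdeg_2, finrank_gdeg_m1, finrank_gdeg_p1,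
      finrank_gdeg_0⟩, ?_, ?_, Jmat_mem, ?_⟩
  · -- (i) existence and uniqueness
    intro X h1 h2
    refine ⟨(⟨Pm2 X, Pm2_mem h1⟩, ⟨Pm1 X, Pm1_mem h1⟩, ⟨P0 X, P0_mem h1 h2⟩,
      ⟨P1 X, P1_mem h1⟩, ⟨P2 X, P2_mem h1⟩), comp_sum X, ?_⟩
    rintro ⟨⟨a, ha⟩, ⟨b, hb⟩, ⟨c, hc⟩, ⟨d, hd⟩, ⟨e, he⟩⟩ hsum
    simp only at hsum
    have h0 : (a - Pm2 X) + (b - Pm1 X) + (c - P0 X) + (d - P1 X) + (e - P2 X) = 0 := by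
      have hcs := comp_sum X
      linear_combination (norm := module) (-1 : ℝ) • hsum + hcs
    obtain ⟨z1, z2, z3, z4, z5⟩ := gdeg_unique_zero
      (sub_mem ha (Pm2_mem h1)) (sub_mem hb (Pm1_mem h1)) (sub_mem hc (P0_mem h1 h2))
      (sub_mem hd (P1_mem h1)) (sub_mem he (P2_mem h1)) h0
    obtain rfl : a = Pm2 X := sub_eq_zero.mp z1
    obtain rfl : b = Pm1 X := sub_eq_zero.mp z2
    obtain rfl : c = P0 X := sub_eq_zero.mp z3
    obtain rfl : d = P1 X := sub_eq_zero.mp z4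
    obtain rfl : e = P2 X := sub_eq_zero.mp z5
    rfl
  · -- (ii)
    apply le_antisymm
    · rw [Submodule.span_le]
      rintro Z ⟨X, hX, Y, hY, rfl⟩
      rw [param_m1 hX, param_m1 hY, comm_Mneg]
      exact Submodule.smul_mem _ _ Bm2_mem
    · intro X hX
      rw [param_m2 hX]
      refine Submodule.smul_mem _ _ ?_
      have hBm2 : Bm2 = (1/2 : ℝ) • ((2 : ℝ) • Bm2) := by
        rw [smul_smul]; norm_num
      rw [hBm2]
      refine Submodule.smul_mem _ _ (Submodule.subset_span ?_)
      refine ⟨Mneg 1 0, Mneg_mem 1 0, Mneg (-Complex.I) 0, Mneg_mem _ _, ?_⟩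
      rw [comm_Mneg]
      norm_num
  · -- (iii)
    intro X hX hcom
    obtain ⟨z, w, hp⟩ : ∃ z w, X = Mneg z w := ⟨_, _, param_m1 hX⟩
    have h0 := hcom (Mneg (Complex.I * z) (Complex.I * w)) (Mneg_mem _ _)
    rw [hp, comm_Mneg] at h0
    have e0 := congrFun (congrFun h0 0) 0
    simp [Bm2, Matrix.smul_apply, Complex.real_smul, Complex.ext_iff] at e0
    have n1 : z.re * z.re = 0 := by
      nlinarith [mul_self_nonneg z.re, mul_self_nonneg z.im, mul_self_nonneg w.re,
        mul_self_nonneg w.im]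
    have n2 : z.im * z.im = 0 := by
      nlinarith [mul_self_nonneg z.re, mul_self_nonneg z.im, mul_self_nonneg w.re,
        mul_self_nonneg w.im]
    have n3 : w.re * w.re = 0 := by
      nlinarith [mul_self_nonneg z.re, mul_self_nonneg z.im, mul_self_nonneg w.re,
        mul_self_nonneg w.im]
    have n4 : w.im * w.im = 0 := by
      nlinarith [mul_self_nonneg z.re, mul_self_nonneg z.im, mul_self_nonneg w.re,
        mul_self_nonneg w.im]
    obtain rfl : z = 0 := Complex.ext (mul_self_eq_zero.mp n1) (mul_self_eq_zero.mp n2)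
    obtain rfl : w = 0 := Complex.ext (mul_self_eq_zero.mp n3) (mul_self_eq_zero.mp n4)
    rw [hp, Mneg_zero]
  · -- (iv)
    intro X hX
    obtain ⟨z, w, hp⟩ : ∃ z w, X = Mneg z w := ⟨_, _, param_m1 hX⟩
    rw [hp]
    exact Jmat_sq z w
end
end
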